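/- arXiv:1603.03661 — 8 statements merged into one kernel-verified Lean document; each statement's English description precedes it below -/
import Mathlib

section
/- Let X be a non-commutative Corson countably compact space and let Y be a countably closed subset of X. Then Y, with the subspace topology, is a non-commutative Corson countably compact space. -/
open Filter Topology Set

universe u

section Defs

/-- A space is countably compact if every countable open cover has a finite subcover. -/
def CountablyCompact (X : Type u) [TopologicalSpace X] : Prop :=
  ∀ U : ℕ → Set X, (∀ n, IsOpen (U n)) → (⋃ n, U n) = Set.univ →
    ∃ t : Finset ℕ, (⋃ n ∈ t, U n) = Set.univ

variable {X : Type u} [TopologicalSpace X]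

/-- A retractional skeleton on a topological space `X`. -/
structure IsRetractionalSkeleton {Γ : Type u} [PartialOrder Γ] (r : Γ → X → X) : Prop where
  nonempty : Nonempty Γ
  directed : ∀ s t : Γ, ∃ w, s ≤ w ∧ t ≤ w
  continuous : ∀ s, Continuous (r s)
  retraction : ∀ s, r s ∘ r s = r s
  compact_range : ∀ s, IsCompact (Set.range (r s))
  metrizable_range : ∀ s, TopologicalSpace.MetrizableSpace (Set.range (r s))
  comp_eq_of_le : ∀ s t, s ≤ t → r t ∘ r s = r s ∧ r s ∘ r t = r s
  seq_sup : ∀ u : ℕ → Γ, Monotone u →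
    ∃ t, IsLUB (Set.range u) t ∧
      ∀ x, Filter.Tendsto (fun n => r (u n) x) Filter.atTop (nhds (r t x))
  tendsto_id : ∀ x, Filter.Tendsto (fun s => r s x) Filter.atTop (nhds x)

/-- `X` admits a retractional skeleton (non-commutative Valdivia when `X` is compact). -/
def HasRetractionalSkeleton (X : Type u) [TopologicalSpace X] : Prop :=
  ∃ (Γ : Type u) (_ : PartialOrder Γ) (r : Γ → X → X), IsRetractionalSkeleton r

/-- `X` admits a full retractional skeleton. -/
def HasFullRetractionalSkeleton (X : Type u) [TopologicalSpace X] : Prop :=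
  ∃ (Γ : Type u) (_ : PartialOrder Γ) (r : Γ → X → X),
    IsRetractionalSkeleton r ∧ ∀ x : X, ∃ s, x ∈ Set.range (r s)

/-- A non-commutative Corson countably compact space. -/
def IsNCCorson (X : Type u) [TopologicalSpace X] : Prop :=
  CountablyCompact X ∧ HasFullRetractionalSkeleton X

/-- A weakly non-commutative Corson countably compact space: a countably compact
continuous image of a non-commutative Corson countably compact space. -/
def IsWeaklyNCCorson (Y : Type u) [TopologicalSpace Y] : Prop :=
  CountablyCompact Y ∧
  ∃ (X : Type u) (_ : TopologicalSpace X) (_ : T2Space X) (_ : CompletelyRegularSpace X),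
    IsNCCorson X ∧ ∃ f : X → Y, Continuous f ∧ Function.Surjective f

/-- A weakly non-commutative Valdivia compact space: a compact space with a dense
countably compact subspace which is weakly non-commutative Corson. -/
def IsWeaklyNCValdivia (K : Type u) [TopologicalSpace K] : Prop :=
  CompactSpace K ∧ ∃ D : Set K, Dense D ∧ IsWeaklyNCCorson ↥D

end Defs

/-! ### Auxiliary lemmas -/

section Aux

variable {X : Type u} [TopologicalSpace X] {Γ : Type u} [PartialOrder Γ] {r : Γ → X → X}

namespace IsRetractionalSkeleton

theorem retr_apply (hr : IsRetractionalSkeleton r) (s : Γ) (x : X) :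
    r s (r s x) = r s x :=
  congrFun (hr.retraction s) x

theorem comp1 (hr : IsRetractionalSkeleton r) {s t : Γ} (h : s ≤ t) (x : X) :
    r t (r s x) = r s x :=
  congrFun (hr.comp_eq_of_le s t h).1 x

theorem comp2 (hr : IsRetractionalSkeleton r) {s t : Γ} (h : s ≤ t) (x : X) :
    r s (r t x) = r s x :=
  congrFun (hr.comp_eq_of_le s t h).2 x

theorem fixed_of_le (hr : IsRetractionalSkeleton r) {s t : Γ} (h : s ≤ t) {x : X}
    (hx : r s x = x) : r t x = x := by
  have h1 := hr.comp1 h x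
  rw [hx] at h1
  exact h1

theorem fixed_of_mem_range (hr : IsRetractionalSkeleton r) {s : Γ} {x : X}
    (hx : x ∈ Set.range (r s)) : r s x = x := by
  obtain ⟨w, hw⟩ := hx
  rw [← hw, hr.retr_apply]

/-- Any countable family in `Γ` has an upper bound. -/
theorem exists_upper_bound (hr : IsRetractionalSkeleton r) (c : ℕ → Γ) :
    ∃ t, ∀ n, c n ≤ t := by
  choose f hf1 hf2 using hr.directed
  let u : ℕ → Γ := fun n => Nat.rec (c 0) (fun m um => f um (c (m + 1))) n
  have hu : Monotone u := monotone_nat_of_le_succ fun n => hf1 _ _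
  have huc : ∀ n, c n ≤ u n := by
    intro n
    cases n with
    | zero => exact le_refl _
    | succ m => exact hf2 _ _
  obtain ⟨t, hlub, -⟩ := hr.seq_sup u hu
  exact ⟨t, fun n => (huc n).trans (hlub.1 ⟨n, rfl⟩)⟩

/-- For every index `s` and set `Y`, there is a countable `A ⊆ Y` whose image under
`r s` is dense in `r s '' Y`. -/
theorem exists_countable_dense_image (hr : IsRetractionalSkeleton r) (s : Γ) (Y : Set X) :
    ∃ A : Set X, A ⊆ Y ∧ A.Countable ∧ r s '' Y ⊆ closure (r s '' A) := by
  classical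
  haveI := hr.metrizable_range s
  haveI : CompactSpace ↥(Set.range (r s)) := isCompact_iff_compactSpace.mp (hr.compact_range s)
  haveI : SecondCountableTopology ↥(Set.range (r s)) := by
    letI := TopologicalSpace.metrizableSpaceMetric ↥(Set.range (r s))
    infer_instance
  set S : Set ↥(Set.range (r s)) := Subtype.val ⁻¹' (r s '' Y) with hS
  obtain ⟨D, hDc, hDd⟩ := TopologicalSpace.exists_countable_dense ↥S
  set c : Set X := (fun d : ↥S => ((d : ↥(Set.range (r s))) : X)) '' D with hc
  have hc_sub : c ⊆ r s '' Y := by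
    rintro _ ⟨d, -, rfl⟩
    exact d.2
  have hc_count : c.Countable := hDc.image _
  have hch : ∀ p ∈ c, ∃ a, a ∈ Y ∧ r s a = p := by
    intro p hp
    obtain ⟨a, ha, hpa⟩ := hc_sub hp
    exact ⟨a, ha, hpa⟩
  choose g hg1 hg2 using hch
  haveI : Countable ↥c := hc_count.to_subtype
  refine ⟨Set.range (fun p : ↥c => g p.1 p.2), ?_, countable_range _, ?_⟩
  · rintro _ ⟨p, rfl⟩
    exact hg1 p.1 p.2
  · -- it suffices to show `r s '' Y ⊆ closure c`
    have hsub : c ⊆ r s '' Set.range (fun p : ↥c => g p.1 p.2) := by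
      intro p hp
      exact ⟨g p hp, ⟨⟨p, hp⟩, rfl⟩, hg2 p hp⟩
    refine fun q hq => closure_mono hsub ?_
    rw [mem_closure_iff]
    intro U hU hqU
    obtain ⟨y, hy, rfl⟩ := hq
    have hqmem : r s y ∈ Set.range (r s) := ⟨y, rfl⟩
    have hqS : (⟨r s y, hqmem⟩ : ↥(Set.range (r s))) ∈ S := ⟨y, hy, rfl⟩
    set V : Set ↥S := (fun d : ↥S => ((d : ↥(Set.range (r s))) : X)) ⁻¹' U with hV
    have hVopen : IsOpen V :=
      hU.preimage (continuous_subtype_val.comp continuous_subtype_val)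
    have hVne : V.Nonempty := ⟨⟨⟨r s y, hqmem⟩, hqS⟩, hqU⟩
    obtain ⟨d, hdD, hdV⟩ := hDd.exists_mem_open hVopen hVne
    exact ⟨((d : ↥(Set.range (r s))) : X), hdV, ⟨d, hdD, rfl⟩⟩

end IsRetractionalSkeleton

end Aux

section Aux2

variable {X : Type u} [TopologicalSpace X] [T2Space X] {Γ : Type u} [PartialOrder Γ]
  {r : Γ → X → X}

namespace IsRetractionalSkeleton

/-- Key cofinality lemma: above any index there is one whose retraction maps `Y` into `Y`. -/
theorem exists_ge_mapsTo (hr : IsRetractionalSkeleton r)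
    (hfull : ∀ x : X, ∃ s, x ∈ Set.range (r s)) {Y : Set X}
    (hY : ∀ C : Set X, C ⊆ Y → C.Countable → closure C ⊆ Y) (s₀ : Γ) :
    ∃ t, s₀ ≤ t ∧ ∀ y ∈ Y, r t y ∈ Y := by
  classical
  -- countable "dense" subsets of Y at each level
  choose A hA1 hA2 hA3 using fun s => hr.exists_countable_dense_image s Y
  -- a step function fixing the previously chosen countable set
  have hstep : ∀ s : Γ, ∃ t, s ≤ t ∧ ∀ a ∈ A s, r t a = a := by
    intro s
    rcases (A s).eq_empty_or_nonempty with he | hne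
    · exact ⟨s, le_refl s, by rw [he]; intro a ha; exact absurd ha (notMem_empty a)⟩
    · obtain ⟨e, hes⟩ := (hA2 s).exists_eq_range hne
      have hfix : ∀ n : ℕ, ∃ u, r u (e n) = e n := by
        intro n
        obtain ⟨u, hu⟩ := hfull (e n)
        exact ⟨u, hr.fixed_of_mem_range hu⟩
      choose σ hσ using hfix
      obtain ⟨t', ht'⟩ := hr.exists_upper_bound σ
      obtain ⟨t, hts, htt'⟩ := hr.directed s t'
      refine ⟨t, hts, ?_⟩
      intro a ha
      rw [hes] at ha
      obtain ⟨n, rfl⟩ := ha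
      exact hr.fixed_of_le ((ht' n).trans htt') (hσ n)
  choose step hstep1 hstep2 using hstep
  set sn : ℕ → Γ := fun n => step^[n] s₀ with hsn
  have hsucc : ∀ n, sn (n + 1) = step (sn n) := fun n => Function.iterate_succ_apply' _ _ _
  have hmono : Monotone sn := monotone_nat_of_le_succ (fun n => by
    rw [hsucc n]; exact hstep1 _)
  obtain ⟨t, hlub, htend⟩ := hr.seq_sup sn hmono
  have hle : ∀ n, sn n ≤ t := fun n => hlub.1 ⟨n, rfl⟩
  have hs0 : sn 0 = s₀ := rfl
  refine ⟨t, hs0 ▸ hle 0, ?_⟩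
  intro y hy
  -- points of `A (sn n)` are fixed by `r t`
  have hfixA : ∀ n, ∀ a ∈ A (sn n), r t a = a := by
    intro n a ha
    refine hr.fixed_of_le (hle (n + 1)) ?_
    rw [hsucc n]
    exact hstep2 (sn n) a ha
  -- everything lives in the metrizable compact `Z = range (r t)`
  have hZmem : ∀ n (x : X), r (sn n) x ∈ Set.range (r t) :=
    fun n x => ⟨r (sn n) x, hr.comp1 (hle n) x⟩
  haveI : TopologicalSpace.MetrizableSpace ↥(Set.range (r t)) := hr.metrizable_range t
  letI : MetricSpace ↥(Set.range (r t)) :=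
    TopologicalSpace.metrizableSpaceMetric ↥(Set.range (r t))
  haveI : CompactSpace ↥(Set.range (r t)) := isCompact_iff_compactSpace.mp (hr.compact_range t)
  set zhat : ↥(Set.range (r t)) := ⟨r t y, ⟨y, rfl⟩⟩ with hzhat
  set chat : ℕ → ↥(Set.range (r t)) := fun n => ⟨r (sn n) y, hZmem n y⟩ with hchat
  have hchat_t : Tendsto chat atTop (𝓝 zhat) := tendsto_subtype_rng.mpr (htend y)
  -- pick approximating points from the countable sets
  have hpick : ∀ n : ℕ, ∃ a, a ∈ A (sn n) ∧
      dist (⟨r (sn n) a, hZmem n a⟩ : ↥(Set.range (r t))) (chat n) < 1 / ((n : ℝ) + 1) := by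
    intro n
    have hball : IsOpen (Metric.ball (chat n) (1 / ((n : ℝ) + 1))) := Metric.isOpen_ball
    obtain ⟨U, hU, hUeq⟩ := IsInducing.subtypeVal.isOpen_iff.mp hball
    have hcU : r (sn n) y ∈ U := by
      have h0 : chat n ∈ Metric.ball (chat n) (1 / ((n : ℝ) + 1)) :=
        Metric.mem_ball_self (by positivity)
      rw [← hUeq] at h0
      exact h0
    have hcl : r (sn n) y ∈ closure (r (sn n) '' A (sn n)) := hA3 (sn n) ⟨y, hy, rfl⟩
    obtain ⟨q, hqU, hqim⟩ := mem_closure_iff.mp hcl U hU hcU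
    obtain ⟨a, haA, rfl⟩ := hqim
    refine ⟨a, haA, ?_⟩
    have : (⟨r (sn n) a, hZmem n a⟩ : ↥(Set.range (r t))) ∈
        Metric.ball (chat n) (1 / ((n : ℝ) + 1)) := by
      rw [← hUeq]
      exact hqU
    exact Metric.mem_ball.mp this
  choose a ha1 ha2 using hpick
  set bhat : ℕ → ↥(Set.range (r t)) := fun n => ⟨r (sn n) (a n), hZmem n (a n)⟩ with hbhat
  have hbz : Tendsto bhat atTop (𝓝 zhat) := by
    rw [tendsto_iff_dist_tendsto_zero]
    have hub : ∀ n : ℕ, dist (bhat n) zhat ≤ 1 / ((n : ℝ) + 1) + dist (chat n) zhat := by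
      intro n
      calc dist (bhat n) zhat ≤ dist (bhat n) (chat n) + dist (chat n) zhat :=
            dist_triangle _ _ _
        _ ≤ 1 / ((n : ℝ) + 1) + dist (chat n) zhat := by
            have := le_of_lt (ha2 n)
            gcongr
    have hg : Tendsto (fun n : ℕ => 1 / ((n : ℝ) + 1) + dist (chat n) zhat) atTop (𝓝 0) := by
      have h1 : Tendsto (fun n : ℕ => 1 / ((n : ℝ) + 1)) atTop (𝓝 0) :=
        tendsto_one_div_add_atTop_nhds_zero_nat
      have h2 : Tendsto (fun n => dist (chat n) zhat) atTop (𝓝 0) :=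
        tendsto_iff_dist_tendsto_zero.mp hchat_t
      simpa using h1.add h2
    exact squeeze_zero (fun n => dist_nonneg) hub hg
  set ahat : ℕ → ↥(Set.range (r t)) :=
    fun n => ⟨a n, ⟨a n, hfixA n (a n) (ha1 n)⟩⟩ with hahat
  obtain ⟨what, -, φ, hφ, hconv⟩ :=
    IsCompact.tendsto_subseq (x := ahat) isCompact_univ (fun n => mem_univ _)
  have haconv : Tendsto (fun k => a (φ k)) atTop (𝓝 (what : X)) := by
    have h0 := tendsto_subtype_rng.mp hconv
    exact h0
  have hw_cl : (what : X) ∈ closure (Set.range a) :=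
    mem_closure_of_tendsto haconv (Eventually.of_forall fun k => mem_range_self _)
  have hwY : (what : X) ∈ Y := by
    have hsub : Set.range a ⊆ Y := by
      rintro _ ⟨n, rfl⟩
      exact hA1 (sn n) (ha1 n)
    exact hY (Set.range a) hsub (countable_range a) hw_cl
  have hwfix : r t (what : X) = (what : X) := by
    have hsub : Set.range a ⊆ {x | r t x = x} := by
      rintro _ ⟨n, rfl⟩
      exact hfixA n (a n) (ha1 n)
    exact closure_minimal hsub (isClosed_eq (hr.continuous t) continuous_id) hw_cl
  have key : ∀ m, r (sn m) (what : X) = r (sn m) (r t y) := by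
    intro m
    have h1 : Tendsto (fun k => r (sn m) (a (φ k))) atTop (𝓝 (r (sn m) (what : X))) :=
      ((hr.continuous (sn m)).tendsto _).comp haconv
    have hbconv : Tendsto (fun k => r (sn (φ k)) (a (φ k))) atTop (𝓝 (r t y)) := by
      have h0 := tendsto_subtype_rng.mp (hbz.comp hφ.tendsto_atTop)
      exact h0
    have h2 : Tendsto (fun k => r (sn m) (r (sn (φ k)) (a (φ k)))) atTop
        (𝓝 (r (sn m) (r t y))) := ((hr.continuous (sn m)).tendsto _).comp hbconv
    have heq : ∀ᶠ k in atTop, r (sn m) (a (φ k)) = r (sn m) (r (sn (φ k)) (a (φ k))) := by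
      filter_upwards [eventually_ge_atTop m] with k hk
      exact (hr.comp2 (hmono (hk.trans hφ.le_apply)) (a (φ k))).symm
    exact tendsto_nhds_unique (h1.congr' heq) h2
  have hw2 : Tendsto (fun m => r (sn m) (what : X)) atTop (𝓝 (what : X)) := by
    have h0 := htend (what : X)
    rwa [hwfix] at h0
  have hz2 : Tendsto (fun m => r (sn m) (what : X)) atTop (𝓝 (r t y)) := by
    have h0 := htend (r t y)
    rw [hr.retr_apply t y] at h0
    exact h0.congr (fun m => (key m).symm)
  have hwz : (what : X) = r t y := tendsto_nhds_unique hw2 hz2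
  rw [← hwz]
  exact hwY

/-- The image `r s '' Y` is compact whenever `r s` maps `Y` into `Y`. -/
theorem isCompact_image_of_mapsTo (hr : IsRetractionalSkeleton r) {Y : Set X}
    (hY : ∀ C : Set X, C ⊆ Y → C.Countable → closure C ⊆ Y)
    {s : Γ} (hs : ∀ y ∈ Y, r s y ∈ Y) : IsCompact (r s '' Y) := by
  haveI := hr.metrizable_range s
  have hclosed : closure (r s '' Y) ⊆ r s '' Y := by
    intro p hp
    have hpZ : p ∈ Set.range (r s) := by
      have h1 : closure (r s '' Y) ⊆ closure (Set.range (r s)) :=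
        closure_mono (image_subset_range _ _)
      have h2 : closure (Set.range (r s)) = Set.range (r s) :=
        (hr.compact_range s).isClosed.closure_eq
      exact h2 ▸ h1 hp
    have hmem : (⟨p, hpZ⟩ : ↥(Set.range (r s))) ∈
        closure (Subtype.val ⁻¹' (r s '' Y) : Set ↥(Set.range (r s))) := by
      rw [closure_subtype]
      have himg : Subtype.val '' (Subtype.val ⁻¹' (r s '' Y) : Set ↥(Set.range (r s)))
          = r s '' Y := by
        rw [Set.image_preimage_eq_inter_range, Subtype.range_coe]
        exact inter_eq_left.mpr (image_subset_range _ _)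
      rw [himg]
      exact hp
    obtain ⟨x, hx1, hx2⟩ := mem_closure_iff_seq_limit.mp hmem
    set q : ℕ → X := fun n => ((x n : ↥(Set.range (r s))) : X) with hq
    have hq_t : Tendsto q atTop (𝓝 p) := by
      have h0 := tendsto_subtype_rng.mp hx2
      exact h0
    have hq_im : ∀ n, q n ∈ r s '' Y := fun n => hx1 n
    have hq_Y : ∀ n, q n ∈ Y := by
      intro n
      obtain ⟨y, hy, hyq⟩ := hq_im n
      rw [← hyq]
      exact hs y hy
    have hpY : p ∈ Y := by
      refine hY (Set.range q) (by rintro _ ⟨n, rfl⟩; exact hq_Y n) (countable_range q) ?_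
      exact mem_closure_of_tendsto hq_t (Eventually.of_forall fun n => mem_range_self _)
    have hfixq : ∀ n, r s (q n) = q n := by
      intro n
      obtain ⟨y, _, hyq⟩ := hq_im n
      rw [← hyq, hr.retr_apply]
    have hfixp : r s p = p := by
      have h1 : Tendsto (fun n => r s (q n)) atTop (𝓝 (r s p)) :=
        ((hr.continuous s).tendsto _).comp hq_t
      have h2 : Tendsto (fun n => r s (q n)) atTop (𝓝 p) := hq_t.congr fun n => (hfixq n).symm
      exact tendsto_nhds_unique h1 h2
    exact ⟨p, hpY, hfixp⟩
  exact (hr.compact_range s).of_isClosed_subset (isClosed_of_closure_subset hclosed)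
    (image_subset_range _ _)

end IsRetractionalSkeleton

end Aux2

/-! ### Countable compactness -/

section CC

variable {X : Type u} [TopologicalSpace X]

/-- In a countably compact space, every sequence has a cluster point. -/
theorem CountablyCompact.exists_cluster (hX : CountablyCompact X) (x : ℕ → X) :
    ∃ p, ∀ k, p ∈ closure (x '' Set.Ici k) := by
  by_contra h
  push_neg at h
  set U : ℕ → Set X := fun k => (closure (x '' Set.Ici k))ᶜ with hU
  have hUopen : ∀ k, IsOpen (U k) := fun k => isClosed_closure.isOpen_compl
  have hUcov : (⋃ k, U k) = univ := by
    ext p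
    simp only [mem_iUnion, mem_univ, iff_true, mem_compl_iff, hU]
    exact h p
  obtain ⟨t, ht⟩ := hX U hUopen hUcov
  have hN : x (t.sup id) ∈ ⋃ k ∈ t, U k := ht ▸ mem_univ _
  simp only [mem_iUnion] at hN
  obtain ⟨k, hkt, hk⟩ := hN
  exact hk (subset_closure ⟨t.sup id, Finset.le_sup (f := id) hkt, rfl⟩)

/-- A countably closed subset of a countably compact space is countably compact. -/
theorem CountablyCompact.countablyClosed_subset (hX : CountablyCompact X) {Y : Set X}
    (hY : ∀ C : Set X, C ⊆ Y → C.Countable → closure C ⊆ Y) : CountablyCompact ↥Y := by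
  intro V hVopen hVcov
  by_contra hnc
  push_neg at hnc
  have hpick : ∀ n : ℕ, ∃ yh : ↥Y, yh ∉ ⋃ k ∈ Finset.range (n + 1), V k := by
    intro n
    by_contra h
    push_neg at h
    exact hnc (Finset.range (n + 1)) (eq_univ_iff_forall.mpr h)
  choose yh hyh using hpick
  obtain ⟨p, hp⟩ := hX.exists_cluster (fun n => (yh n : X))
  have hpY : p ∈ Y := by
    refine hY (Set.range fun n => (yh n : X)) (by rintro _ ⟨n, rfl⟩; exact (yh n).2)
      (countable_range _) ?_
    exact closure_mono (image_subset_range _ _) (hp 0)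
  have hpV : (⟨p, hpY⟩ : ↥Y) ∈ ⋃ n, V n := hVcov ▸ mem_univ _
  obtain ⟨m, hm⟩ := mem_iUnion.mp hpV
  obtain ⟨U, hUopen, hUeq⟩ := IsInducing.subtypeVal.isOpen_iff.mp (hVopen m)
  have hpU : p ∈ U := by
    rw [← hUeq] at hm
    exact hm
  obtain ⟨q, hqU, hqim⟩ := mem_closure_iff.mp (hp m) U hUopen hpU
  obtain ⟨n, hn, rfl⟩ := hqim
  have hVmem : yh n ∈ V m := by
    rw [← hUeq]
    exact hqU
  exact hyh n (Set.mem_biUnion (Finset.mem_range.mpr (Nat.lt_succ_of_le hn)) hVmem)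

end CC

/-! ### Main theorem -/

/-- A countably closed subspace of a non-commutative Corson countably
compact space is a non-commutative Corson countably compact space. -/
theorem countablyClosed_subspace_of_ncCorson
    {X : Type u} [TopologicalSpace X] [T2Space X] [CompletelyRegularSpace X]
    (hX : IsNCCorson X) (Y : Set X)
    (hY : ∀ C : Set X, C ⊆ Y → C.Countable → closure C ⊆ Y) :
    IsNCCorson ↥Y := by
  classical
  obtain ⟨hXcc, Γ, instΓ, r, hr, hfull⟩ := hX
  refine ⟨hXcc.countablyClosed_subset hY, ?_⟩
  haveI : Nonempty Γ := hr.nonempty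
  haveI : IsDirected Γ (· ≤ ·) := ⟨hr.directed⟩
  have hcof : ∀ s : Γ, ∃ t : Γ, s ≤ t ∧ ∀ y ∈ Y, r t y ∈ Y :=
    hr.exists_ge_mapsTo hfull hY
  -- the index set of the induced skeleton
  refine ⟨{s : Γ // ∀ y ∈ Y, r s y ∈ Y}, inferInstance,
    (fun s (yh : ↥Y) => (⟨r s.1 yh.1, s.2 yh.1 yh.2⟩ : ↥Y)), ?_, ?_⟩
  · have hdir : ∀ s t : {s : Γ // ∀ y ∈ Y, r s y ∈ Y},
        ∃ w, s ≤ w ∧ t ≤ w := by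
      intro s t
      obtain ⟨w, hsw, htw⟩ := hr.directed s.1 t.1
      obtain ⟨w', hww', hw'Y⟩ := hcof w
      exact ⟨⟨w', hw'Y⟩, Subtype.coe_le_coe.mp (hsw.trans hww'),
        Subtype.coe_le_coe.mp (htw.trans hww')⟩
    have hne : Nonempty {s : Γ // ∀ y ∈ Y, r s y ∈ Y} := by
      obtain ⟨t, -, htY⟩ := hcof (Classical.arbitrary Γ)
      exact ⟨⟨t, htY⟩⟩
    haveI := hne
    haveI : IsDirected {s : Γ // ∀ y ∈ Y, r s y ∈ Y} (· ≤ ·) := ⟨hdir⟩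
    refine ⟨hne, hdir, ?_, ?_, ?_, ?_, ?_, ?_, ?_⟩
    · -- continuity
      intro s
      exact Continuous.subtype_mk ((hr.continuous s.1).comp continuous_subtype_val) _
    · -- retraction
      intro s
      funext yh
      exact Subtype.ext (hr.retr_apply s.1 yh.1)
    · -- compact range
      intro s
      rw [Subtype.isCompact_iff]
      have himg : Subtype.val ''
          (Set.range fun yh : ↥Y => (⟨r s.1 yh.1, s.2 yh.1 yh.2⟩ : ↥Y)) = r s.1 '' Y := by
        ext z
        constructor
        · rintro ⟨zh, ⟨yh, rfl⟩, rfl⟩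
          exact ⟨yh.1, yh.2, rfl⟩
        · rintro ⟨y, hy, rfl⟩
          exact ⟨⟨r s.1 y, s.2 y hy⟩, ⟨⟨y, hy⟩, rfl⟩, rfl⟩
      rw [himg]
      exact hr.isCompact_image_of_mapsTo hY s.2
    · -- metrizable range
      intro s
      haveI := hr.metrizable_range s.1
      have hvv : IsEmbedding (fun zh : ↥(Set.range fun yh : ↥Y =>
          (⟨r s.1 yh.1, s.2 yh.1 yh.2⟩ : ↥Y)) => ((zh : ↥Y) : X)) :=
        IsEmbedding.subtypeVal.comp IsEmbedding.subtypeVal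
      have hmem : ∀ zh : ↥(Set.range fun yh : ↥Y =>
          (⟨r s.1 yh.1, s.2 yh.1 yh.2⟩ : ↥Y)), ((zh : ↥Y) : X) ∈ Set.range (r s.1) := by
        rintro ⟨zh, yh, rfl⟩
        exact ⟨yh.1, rfl⟩
      exact (hvv.codRestrict _ hmem).metrizableSpace
    · -- comp_eq_of_le
      intro s t hst
      constructor
      · funext yh
        exact Subtype.ext (hr.comp1 (Subtype.coe_le_coe.mpr hst) yh.1)
      · funext yh
        exact Subtype.ext (hr.comp2 (Subtype.coe_le_coe.mpr hst) yh.1)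
    · -- seq_sup
      intro u hu
      obtain ⟨t, hlub, htend⟩ := hr.seq_sup (fun n => (u n).1)
        (fun a b hab => Subtype.coe_le_coe.mpr (hu hab))
      have htY : ∀ y ∈ Y, r t y ∈ Y := by
        intro y hy
        have hcl : r t y ∈ closure (Set.range fun n => r (u n).1 y) :=
          mem_closure_of_tendsto (htend y) (Eventually.of_forall fun n => mem_range_self _)
        exact hY _ (by rintro _ ⟨n, rfl⟩; exact (u n).2 y hy) (countable_range _) hcl
      refine ⟨⟨t, htY⟩, ⟨?_, ?_⟩, ?_⟩
      · rintro _ ⟨n, rfl⟩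
        exact Subtype.coe_le_coe.mp (hlub.1 ⟨n, rfl⟩)
      · intro b hb
        refine Subtype.coe_le_coe.mp (hlub.2 ?_)
        rintro _ ⟨n, rfl⟩
        exact Subtype.coe_le_coe.mpr (hb ⟨n, rfl⟩)
      · intro yh
        exact tendsto_subtype_rng.mpr (htend yh.1)
    · -- tendsto_id
      intro yh
      rw [tendsto_subtype_rng]
      rw [Filter.tendsto_def]
      intro U hU
      have h0 : {s : Γ | r s yh.1 ∈ U} ∈ (atTop : Filter Γ) :=
        Filter.tendsto_def.mp (hr.tendsto_id yh.1) U hU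
      obtain ⟨a, ha⟩ := eventually_atTop.mp h0
      obtain ⟨b, hab, hbY⟩ := hcof a
      refine eventually_atTop.mpr ⟨⟨b, hbY⟩, ?_⟩
      intro c hc
      exact ha c.1 (hab.trans (Subtype.coe_le_coe.mpr hc))
  · -- fullness
    intro yh
    obtain ⟨s, hs⟩ := hfull yh.1
    obtain ⟨t, hst, htY⟩ := hcof s
    have hfix : r t yh.1 = yh.1 := hr.fixed_of_le hst (hr.fixed_of_mem_range hs)
    exact ⟨⟨t, htY⟩, ⟨yh, Subtype.ext hfix⟩⟩
end

section
/- Let {X_n}_{n∈ω} be a countable family of non-commutative Corson countably compact spaces. Then the product ∏_{n∈ω} X_n, with the product topology, is a non-commutative Corson countably compact space. -/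
open Filter Topology Set

universe u

section Aux

/-- A space with a full retractional skeleton (Hausdorff) is sequentially compact. -/
theorem aux_seqCpt_of_full {X : Type u} [TopologicalSpace X] [T2Space X]
    (h : HasFullRetractionalSkeleton X) (x : ℕ → X) :
    ∃ (a : X) (φ : ℕ → ℕ), StrictMono φ ∧ Tendsto (x ∘ φ) atTop (𝓝 a) := by
  obtain ⟨Γ, _, r, hr, hfull⟩ := h
  choose s hs using fun k => hfull (x k)
  choose w hw1 hw2 using hr.directed
  let u : ℕ → Γ := fun k => Nat.rec (s 0) (fun k uk => w uk (s (k + 1))) k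
  have hu : Monotone u := monotone_nat_of_le_succ fun k => hw1 _ _
  have hsu : ∀ k, s k ≤ u k := by
    intro k
    cases k with
    | zero => exact le_refl _
    | succ k => exact hw2 _ _
  obtain ⟨t, -, ht⟩ := hr.seq_sup u hu
  have hfix : ∀ k, r t (x k) = x k := by
    intro k
    have h1 : Tendsto (fun m => r (u m) (x k)) atTop (𝓝 (r t (x k))) := ht (x k)
    have h2 : ∀ m ≥ k, r (u m) (x k) = x k := by
      intro m hm
      obtain ⟨y, hy⟩ := hs k
      have hle : s k ≤ u m := (hsu k).trans (hu hm)
      calc r (u m) (x k) = r (u m) (r (s k) y) := by rw [hy]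
        _ = r (s k) y := congrFun (hr.comp_eq_of_le _ _ hle).1 y
        _ = x k := hy
    have he : (fun _ : ℕ => x k) =ᶠ[atTop] fun m => r (u m) (x k) :=
      eventually_atTop.2 ⟨k, fun m hm => (h2 m hm).symm⟩
    exact tendsto_nhds_unique h1 (Tendsto.congr' he tendsto_const_nhds)
  haveI := hr.metrizable_range t
  haveI : CompactSpace ↥(Set.range (r t)) := isCompact_iff_compactSpace.mp (hr.compact_range t)
  set y : ℕ → ↥(Set.range (r t)) := fun k => ⟨x k, ⟨x k, hfix k⟩⟩ with hy
  obtain ⟨a, φ, hφ, hconv⟩ := SeqCompactSpace.tendsto_subseq y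
  refine ⟨a.1, φ, hφ, ?_⟩
  exact (continuous_subtype_val.tendsto a).comp hconv

/-- Sequential compactness implies countable compactness. -/
theorem aux_countablyCompact_of_seq {X : Type u} [TopologicalSpace X]
    (h : ∀ x : ℕ → X, ∃ (a : X) (φ : ℕ → ℕ), StrictMono φ ∧ Tendsto (x ∘ φ) atTop (𝓝 a)) :
    CountablyCompact X := by
  intro U hU hcov
  by_contra hc
  push_neg at hc
  have hx : ∀ k : ℕ, ∃ z : X, z ∉ ⋃ n ∈ Finset.range (k + 1), U n := by
    intro k
    exact Set.ne_univ_iff_exists_notMem _ |>.mp (hc (Finset.range (k + 1)))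
  choose x hxk using hx
  obtain ⟨a, φ, hφ, hconv⟩ := h x
  have ha : a ∈ ⋃ n, U n := hcov ▸ Set.mem_univ a
  obtain ⟨m, ham⟩ := Set.mem_iUnion.mp ha
  have hev : ∀ᶠ k in atTop, x (φ k) ∈ U m := hconv ((hU m).mem_nhds ham)
  obtain ⟨k0, hk0⟩ := eventually_atTop.mp hev
  have hk : x (φ (max k0 m)) ∈ U m := hk0 _ (le_max_left _ _)
  refine hxk (φ (max k0 m)) ?_
  refine Set.mem_biUnion ?_ hk
  exact Finset.mem_range.mpr (Nat.lt_succ_of_le ((le_max_right k0 m).trans hφ.le_apply))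

end Aux

/-- A countable product of non-commutative Corson countably compact
spaces is a non-commutative Corson countably compact space. -/
theorem countable_prod_of_ncCorson
    {X : ℕ → Type u} [∀ n, TopologicalSpace (X n)] [∀ n, T2Space (X n)]
    [∀ n, CompletelyRegularSpace (X n)]
    (h : ∀ n, IsNCCorson (X n)) :
    IsNCCorson (∀ n, X n) := by
  choose Γ inst r hr hfull using fun n => (h n).2
  letI : ∀ n, PartialOrder (Γ n) := inst
  let R : (∀ n, Γ n) → (∀ n, X n) → (∀ n, X n) := fun s x n => r n (s n) (x n)
  have hfixed : ∀ (s : ∀ n, Γ n) (z : ∀ n, X n),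
      (∀ n, z n ∈ Set.range (r n (s n))) → R s z = z := by
    intro s z hz
    funext n
    obtain ⟨y, hy⟩ := hz n
    calc r n (s n) (z n) = r n (s n) (r n (s n) y) := by rw [hy]
      _ = r n (s n) y := congrFun ((hr n).retraction (s n)) y
      _ = z n := hy
  have hrange : ∀ s : ∀ n, Γ n,
      Set.range (R s) = Set.pi Set.univ fun n => Set.range (r n (s n)) := by
    intro s
    ext z
    constructor
    · rintro ⟨x, rfl⟩ n -
      exact ⟨x n, rfl⟩
    · intro hz
      exact ⟨z, hfixed s z fun n => hz n (Set.mem_univ n)⟩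
  have hdir : ∀ s t : ∀ n, Γ n, ∃ w, s ≤ w ∧ t ≤ w := by
    intro s t
    choose ww hh1 hh2 using fun n => (hr n).directed (s n) (t n)
    exact ⟨ww, fun n => hh1 n, fun n => hh2 n⟩
  haveI : Nonempty (∀ n, Γ n) := ⟨fun n => Classical.choice (hr n).nonempty⟩
  haveI : IsDirected (∀ n, Γ n) (· ≤ ·) := ⟨fun a b =>
    let ⟨w, hw1, hw2⟩ := hdir a b; ⟨w, hw1, hw2⟩⟩
  have hskel : IsRetractionalSkeleton R := by
    constructor
    · exact ⟨fun n => Classical.choice (hr n).nonempty⟩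
    · exact hdir
    · intro s
      exact continuous_pi fun n => ((hr n).continuous (s n)).comp (continuous_apply n)
    · intro s
      funext x
      funext n
      exact congrFun ((hr n).retraction (s n)) (x n)
    · intro s
      rw [hrange s]
      exact isCompact_univ_pi fun n => (hr n).compact_range (s n)
    · intro s
      haveI := fun n => (hr n).metrizable_range (s n)
      haveI : TopologicalSpace.MetrizableSpace (∀ n, ↥(Set.range (r n (s n)))) := by
        letI := fun n => TopologicalSpace.metrizableSpaceMetric ↥(Set.range (r n (s n)))
        exact UniformSpace.metrizableSpace
      have hemb : Topology.IsEmbedding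
          (fun (z : ↥(Set.range (R s))) (n : ℕ) =>
            (⟨z.1 n, by
              obtain ⟨x, hx⟩ := z.2
              exact ⟨x n, congrFun hx n⟩⟩ : ↥(Set.range (r n (s n))))) := by
        refine Topology.IsEmbedding.of_comp ?_ ?_
          (g := fun (z : ∀ n, ↥(Set.range (r n (s n)))) (n : ℕ) => (z n : X n)) ?_
        · exact continuous_pi fun n =>
            Continuous.subtype_mk ((continuous_apply n).comp continuous_subtype_val) _
        · exact continuous_pi fun n => continuous_subtype_val.comp (continuous_apply n)
        · exact Topology.IsEmbedding.subtypeVal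
      exact hemb.metrizableSpace
    · intro s t hst
      constructor
      · funext x
        funext n
        exact congrFun ((hr n).comp_eq_of_le (s n) (t n) (hst n)).1 (x n)
      · funext x
        funext n
        exact congrFun ((hr n).comp_eq_of_le (s n) (t n) (hst n)).2 (x n)
    · intro u hu
      choose t ht1 ht2 using fun n =>
        (hr n).seq_sup (fun k => u k n) (fun _ _ hab => hu hab n)
      refine ⟨t, ⟨?_, ?_⟩, ?_⟩
      · rintro v ⟨k, rfl⟩ n
        exact (ht1 n).1 ⟨k, rfl⟩
      · intro b hb n
        refine (ht1 n).2 ?_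
        rintro y ⟨k, rfl⟩
        exact hb ⟨k, rfl⟩ n
      · intro x
        exact tendsto_pi_nhds.mpr fun n => ht2 n (x n)
    · intro x
      refine tendsto_pi_nhds.mpr fun n => ?_
      refine ((hr n).tendsto_id (x n)).comp ?_
      rw [Filter.tendsto_atTop]
      intro b
      rw [Filter.eventually_atTop]
      refine ⟨Function.update (fun m => Classical.choice (hr m).nonempty) n b, fun c hc => ?_⟩
      have := hc n
      rwa [Function.update_self] at this
  have hfull' : ∀ x : ∀ n, X n, ∃ s, x ∈ Set.range (R s) := by
    intro x
    choose s hs using fun n => hfull n (x n)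
    exact ⟨s, x, hfixed s x hs⟩
  have hskel' : HasFullRetractionalSkeleton (∀ n, X n) := ⟨_, _, R, hskel, hfull'⟩
  exact ⟨aux_countablyCompact_of_seq (aux_seqCpt_of_full hskel'), hskel'⟩
end

section
/- Let X_1, …, X_n be a finite family of non-commutative Corson countably compact spaces. Then their topological sum (disjoint union with the sum topology, in which each X_k is clopen) is a non-commutative Corson countably compact space. -/
open Filter Topology Set

universe u

section Aux

open TopologicalSpace

variable {n : ℕ} {X : Fin n → Type u} [∀ k, TopologicalSpace (X k)]
  {Γ : Fin n → Type u} [∀ k, PartialOrder (Γ k)]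

/-- The componentwise retraction on a finite sigma type. -/
def sigmaRetr (r : ∀ k, Γ k → X k → X k) (s : ∀ k, Γ k) (p : Σ k, X k) : Σ k, X k :=
  ⟨p.1, r p.1 (s p.1) p.2⟩

theorem sigmaRetr_range (r : ∀ k, Γ k → X k → X k) (s : ∀ k, Γ k) :
    Set.range (sigmaRetr r s) = ⋃ k, Sigma.mk k '' Set.range (r k (s k)) := by
  ext ⟨k, x⟩
  constructor
  · rintro ⟨⟨j, y⟩, hp⟩
    obtain ⟨rfl, h2⟩ := Sigma.mk.inj_iff.1 hp
    exact Set.mem_iUnion.2 ⟨j, Set.mem_image_of_mem _ ⟨y, eq_of_heq h2⟩⟩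
  · intro hx
    obtain ⟨j, hj⟩ := Set.mem_iUnion.1 hx
    obtain ⟨y, ⟨z, rfl⟩, hyx⟩ := hj
    exact ⟨⟨j, z⟩, hyx⟩

set_option synthInstance.maxHeartbeats 1000000 in
set_option maxHeartbeats 1000000 in
theorem sigmaRetr_skeleton {r : ∀ k, Γ k → X k → X k}
    (hr : ∀ k, IsRetractionalSkeleton (r k)) :
    IsRetractionalSkeleton (sigmaRetr r) := by
  have hcomp : ∀ s, IsCompact (Set.range (sigmaRetr r s)) := by
    intro s
    rw [sigmaRetr_range]
    exact isCompact_iUnion fun k => ((hr k).compact_range (s k)).image continuous_sigmaMk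
  have hfix : ∀ (s : ∀ k, Γ k) (k) (x : X k),
      (⟨k, x⟩ : Σ k, X k) ∈ Set.range (sigmaRetr r s) → r k (s k) x = x := by
    intro s k x hx
    rw [sigmaRetr_range] at hx
    obtain ⟨j, hj⟩ := Set.mem_iUnion.1 hx
    obtain ⟨y, ⟨z, rfl⟩, hyx⟩ := hj
    obtain ⟨rfl, h2⟩ := Sigma.mk.inj_iff.1 hyx
    rw [← eq_of_heq h2]
    exact congrFun ((hr j).retraction (s j)) z
  refine ⟨⟨fun k => (hr k).nonempty.some⟩, ?_, ?_, ?_, hcomp, ?_, ?_, ?_, ?_⟩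
  · intro s t
    choose w h1 h2 using fun k => (hr k).directed (s k) (t k)
    exact ⟨w, h1, h2⟩
  · intro s
    exact continuous_sigma fun k => continuous_sigmaMk.comp ((hr k).continuous (s k))
  · intro s
    funext ⟨k, x⟩
    exact congrArg (Sigma.mk k) (congrFun ((hr k).retraction (s k)) x)
  · -- metrizable
    intro s
    letI : ∀ k, MetricSpace ↥(Set.range (r k (s k))) := fun k =>
      letI := (hr k).metrizable_range (s k)
      TopologicalSpace.metrizableSpaceMetric _
    haveI hms : MetrizableSpace (Σ k, ↥(Set.range (r k (s k)))) := by
      letI m : MetricSpace (Σ k, ↥(Set.range (r k (s k)))) := Metric.Sigma.metricSpace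
      exact (show @MetrizableSpace _ m.toUniformSpace.toTopologicalSpace from inferInstance)
    haveI : T2Space (Σ k, ↥(Set.range (r k (s k)))) := inferInstance
    haveI : CompactSpace ↥(Set.range (sigmaRetr r s)) :=
      isCompact_iff_compactSpace.1 (hcomp s)
    set g : (Σ k, X k) → Σ k, ↥(Set.range (r k (s k))) :=
      fun p => ⟨p.1, ⟨r p.1 (s p.1) p.2, Set.mem_range_self _⟩⟩ with hg_def
    have hg : Continuous g :=
      continuous_sigma fun k =>
        continuous_sigmaMk.comp (Continuous.subtype_mk (p := (· ∈ Set.range (r k (s k))))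
          ((hr k).continuous (s k)) (fun x => Set.mem_range_self x))
    have he : Continuous (fun q : ↥(Set.range (sigmaRetr r s)) => g q.1) :=
      hg.comp continuous_subtype_val
    have hinj : Function.Injective (fun q : ↥(Set.range (sigmaRetr r s)) => g q.1) := by
      rintro ⟨⟨k, x⟩, hx⟩ ⟨⟨k', x'⟩, hx'⟩ hee
      simp only [hg_def] at hee
      obtain ⟨rfl, h2⟩ := Sigma.mk.inj_iff.1 hee
      have h3 : r k (s k) x = r k (s k) x' := congrArg Subtype.val (eq_of_heq h2)
      rw [hfix s k x hx, hfix s k x' hx'] at h3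
      exact Subtype.ext (congrArg (Sigma.mk k) h3)
    exact (he.isClosedEmbedding hinj).toIsEmbedding.metrizableSpace
  · intro s t hst
    constructor <;> funext ⟨k, x⟩
    · exact congrArg (Sigma.mk k) (congrFun ((hr k).comp_eq_of_le (s k) (t k) (hst k)).1 x)
    · exact congrArg (Sigma.mk k) (congrFun ((hr k).comp_eq_of_le (s k) (t k) (hst k)).2 x)
  · intro u hu
    choose t ht htend using fun k => (hr k).seq_sup (fun m => u m k) (fun a b hab => hu hab k)
    refine ⟨t, ⟨?_, ?_⟩, ?_⟩
    · rintro _ ⟨m, rfl⟩ k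
      exact (ht k).1 ⟨m, rfl⟩
    · intro w hw k
      refine (ht k).2 ?_
      rintro _ ⟨m, rfl⟩
      exact hw ⟨m, rfl⟩ k
    · rintro ⟨k, x⟩
      exact (continuous_sigmaMk.tendsto _).comp (htend k x)
  · rintro ⟨k, x⟩
    have heval : Filter.Tendsto (fun s : ∀ k, Γ k => s k) Filter.atTop Filter.atTop := by
      refine tendsto_atTop_atTop_of_monotone (fun a b hab => hab k) ?_
      intro b
      refine ⟨Function.update (fun j => (hr j).nonempty.some) k b, ?_⟩
      rw [Function.update_self]
    exact (continuous_sigmaMk.tendsto x).comp (((hr k).tendsto_id x).comp heval)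

end Aux

/-- A finite topological sum of non-commutative Corson countably
compact spaces is a non-commutative Corson countably compact space. -/
theorem finite_sum_of_ncCorson
    {n : ℕ} {X : Fin n → Type u} [∀ k, TopologicalSpace (X k)] [∀ k, T2Space (X k)]
    [∀ k, CompletelyRegularSpace (X k)]
    (h : ∀ k, IsNCCorson (X k)) :
    IsNCCorson (Σ k, X k) := by
  obtain ⟨Γ, inst, r, hr, hfull⟩ :
      ∃ (Γ : Fin n → Type u) (inst : ∀ k, PartialOrder (Γ k))
        (r : ∀ k, Γ k → X k → X k),
        (∀ k, @IsRetractionalSkeleton _ _ _ (inst k) (r k)) ∧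
          ∀ k x, ∃ s, x ∈ Set.range (r k s) := by
    choose Γ inst r hr hfull using fun k => (h k).2
    exact ⟨Γ, inst, r, hr, hfull⟩
  letI : ∀ k, PartialOrder (Γ k) := inst
  constructor
  · -- countable compactness
    intro U hU hcov
    have hcovk : ∀ k, (⋃ m, Sigma.mk k ⁻¹' U m) = Set.univ := by
      intro k
      rw [← Set.preimage_iUnion, hcov, Set.preimage_univ]
    choose t ht using fun k =>
      (h k).1 (fun m => Sigma.mk k ⁻¹' U m)
        (fun m => (hU m).preimage continuous_sigmaMk) (hcovk k)
    refine ⟨Finset.univ.biUnion t, ?_⟩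
    rw [Set.eq_univ_iff_forall]
    rintro ⟨k, x⟩
    have hx : x ∈ ⋃ m ∈ t k, Sigma.mk k ⁻¹' U m := (ht k).symm ▸ Set.mem_univ x
    obtain ⟨m, hm, hxm⟩ := Set.mem_iUnion₂.1 hx
    exact Set.mem_iUnion₂.2 ⟨m, Finset.mem_biUnion.2 ⟨k, Finset.mem_univ k, hm⟩, hxm⟩
  · refine ⟨∀ k, Γ k, inferInstance, sigmaRetr r, sigmaRetr_skeleton hr, ?_⟩
    rintro ⟨k, x⟩
    obtain ⟨sk, y, hy⟩ := hfull k x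
    refine ⟨Function.update (fun j => (hr j).nonempty.some) k sk, ⟨k, y⟩, ?_⟩
    show (⟨k, r k (Function.update (fun j => (hr j).nonempty.some) k sk k) y⟩ : Σ k, X k) = ⟨k, x⟩
    rw [Function.update_self]
    exact congrArg (Sigma.mk k) hy
end

section
/- Let X be a non-commutative Corson countably compact space, let Y be a Hausdorff completely regular topological space, and let f : X → Y be a quotient map (a surjective continuous map such that a set is open in Y if and only if its preimage is open in X). Then Y is a non-commutative Corson countably compact space. -/
open Filter Topology Set

universe u

section Aux

open TopologicalSpace

/-- The continuous image of a compact second-countable space in a Hausdorff space is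
second countable. -/
theorem secondCountable_of_image {C L : Type*} [TopologicalSpace C] [TopologicalSpace L]
    [CompactSpace C] [T2Space L] [SecondCountableTopology C]
    {h : C → L} (hc : Continuous h) (hs : Function.Surjective h) :
    SecondCountableTopology L := by
  obtain ⟨b, hbc, -, hb⟩ := exists_countable_basis C
  have hclosed : IsClosedMap h := hc.isClosedMap
  set 𝔅 : Set (Set L) := (fun U => (h '' Uᶜ)ᶜ) ''
      {U : Set C | ∃ F : Set (Set C), F.Finite ∧ F ⊆ b ∧ U = ⋃₀ F} with h𝔅
  have hcount : 𝔅.Countable := by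
    refine Set.Countable.image ?_ _
    have : {U : Set C | ∃ F : Set (Set C), F.Finite ∧ F ⊆ b ∧ U = ⋃₀ F}
        ⊆ Set.sUnion '' {F | F.Finite ∧ F ⊆ b} := by
      rintro U ⟨F, hF1, hF2, rfl⟩
      exact ⟨F, ⟨hF1, hF2⟩, rfl⟩
    exact ((Set.countable_setOf_finite_subset hbc).image _).mono this
  have hbasis : IsTopologicalBasis 𝔅 := by
    refine isTopologicalBasis_of_isOpen_of_nhds ?_ ?_
    · rintro W ⟨U, ⟨F, hF1, hF2, rfl⟩, rfl⟩
      have hUopen : IsOpen (⋃₀ F) := isOpen_sUnion fun t ht => hb.isOpen (hF2 ht)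
      exact (hclosed _ hUopen.isClosed_compl).isOpen_compl
    · intro y V hyV hVopen
      have hK : IsCompact (h ⁻¹' {y}) := (isClosed_singleton.preimage hc).isCompact
      have hcov : h ⁻¹' {y} ⊆ ⋃ U ∈ {U | U ∈ b ∧ U ⊆ h ⁻¹' V}, U := by
        intro c hcK
        have hcV : c ∈ h ⁻¹' V := by
          simp only [mem_preimage, mem_singleton_iff] at hcK
          simp [mem_preimage, hcK, hyV]
        obtain ⟨v, hvb, hcv, hvsub⟩ := hb.exists_subset_of_mem_open hcV (hVopen.preimage hc)
        exact mem_biUnion ⟨hvb, hvsub⟩ hcv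
      obtain ⟨F, hFsub, hFfin, hKF⟩ := hK.elim_finite_subcover_image
        (fun U hU => hb.isOpen hU.1) hcov
      refine ⟨(h '' (⋃₀ F)ᶜ)ᶜ, ⟨⋃₀ F, ⟨F, hFfin, fun t ht => (hFsub ht).1, rfl⟩, rfl⟩, ?_, ?_⟩
      · -- y ∈ (h '' (⋃₀ F)ᶜ)ᶜ
        rintro ⟨c, hcU, hcy⟩
        have : c ∈ h ⁻¹' {y} := by simp [mem_preimage, hcy]
        have := hKF this
        rw [← sUnion_eq_biUnion] at this
        exact hcU this
      · intro z hz
        obtain ⟨c, rfl⟩ := hs z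
        by_contra hzV
        have hcU : c ∈ (⋃₀ F)ᶜ := by
          intro hcmem
          obtain ⟨U, hUF, hcU⟩ := hcmem
          exact hzV ((hFsub hUF).2 hcU)
        exact hz ⟨c, hcU, rfl⟩
  exact hbasis.secondCountableTopology hcount

/-- The continuous image of a compact metrizable space in a Hausdorff space is metrizable. -/
theorem metrizable_of_image {C L : Type*} [TopologicalSpace C] [TopologicalSpace L]
    [CompactSpace C] [T2Space L] [MetrizableSpace C]
    {h : C → L} (hc : Continuous h) (hs : Function.Surjective h) :
    MetrizableSpace L := by
  letI : MetricSpace C := TopologicalSpace.metrizableSpaceMetric C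
  haveI : CompactSpace L := ⟨hs.range_eq ▸ isCompact_range hc⟩
  haveI := secondCountable_of_image hc hs
  infer_instance

/-- Auxiliary recursively defined sequence used for the closing-off argument. -/
noncomputable def buildSeq {Γ : Type u} (s₀ : Γ) (ub : Γ → Γ → Γ) (σ : Γ → ℕ → Γ) : ℕ → Γ
  | 0 => s₀
  | (m+1) => ub (buildSeq s₀ ub σ m) (σ (buildSeq s₀ ub σ m.unpair.1) m.unpair.2)
  decreasing_by
  · exact Nat.lt_succ_self m
  · exact Nat.lt_succ_of_le (Nat.unpair_left_le m)

end Aux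

/-- A quotient image of a non-commutative Corson countably compact space
(into a Hausdorff completely regular space) is non-commutative Corson countably compact. -/
theorem quotient_of_ncCorson
    {X Y : Type u} [TopologicalSpace X] [T2Space X] [CompletelyRegularSpace X]
    [TopologicalSpace Y] [T2Space Y] [CompletelyRegularSpace Y]
    (hX : IsNCCorson X) (f : X → Y) (hf : Topology.IsQuotientMap f) :
    IsNCCorson Y := by
  obtain ⟨hXcc, Γ, instΓ, r, skel, full⟩ := hX
  constructor
  · -- countable compactness of Y
    intro U hU hUniv
    obtain ⟨t, ht⟩ := hXcc (fun n => f ⁻¹' (U n)) (fun n => (hU n).preimage hf.continuous)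
      (by rw [← Set.preimage_iUnion, hUniv, Set.preimage_univ])
    refine ⟨t, eq_univ_of_forall fun y => ?_⟩
    obtain ⟨x, rfl⟩ := hf.surjective y
    have hx : x ∈ ⋃ n ∈ t, f ⁻¹' U n := ht ▸ mem_univ x
    simp only [mem_iUnion] at hx ⊢
    obtain ⟨n, hn, hxn⟩ := hx
    exact ⟨n, hn, hxn⟩
  -- basic facts about the skeleton
  have hfix : ∀ s x, x ∈ range (r s) → r s x = x := by
    rintro s x ⟨u, rfl⟩
    have := congrFun (skel.retraction s) u
    simpa using this
  have hrange_mono : ∀ s t : Γ, s ≤ t → range (r s) ⊆ range (r t) := by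
    rintro s t hst x ⟨u, rfl⟩
    have := congrFun (skel.comp_eq_of_le s t hst).1 u
    exact ⟨r s u, by simpa using this⟩
  -- the set of `f`-good indices
  set Good : Γ → Prop := fun t => ∀ x x', f x = f x' → f (r t x) = f (r t x') with hGood
  set E : Set (X × X) := {z | f z.1 = f z.2} with hE
  have hEclosed : IsClosed E :=
    isClosed_eq (hf.continuous.comp continuous_fst) (hf.continuous.comp continuous_snd)
  -- THE KEY CLOSING-OFF LEMMA: good indices are cofinal
  have cof : ∀ s₀ : Γ, ∃ t, s₀ ≤ t ∧ Good t := by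
    intro s₀
    by_cases hne : Nonempty X
    swap
    · exact ⟨s₀, le_refl _, fun x _ _ => (hne ⟨x⟩).elim⟩
    obtain ⟨x₀⟩ := hne
    set A : Γ → Set (X × X) := fun s => (fun z : X × X => (r s z.1, r s z.2)) '' E with hA
    have hA_sub : ∀ s, A s ⊆ range (r s) ×ˢ range (r s) := by
      rintro s z ⟨w, -, rfl⟩
      exact ⟨mem_range_self _, mem_range_self _⟩
    -- separability: countable dense subsets of A s
    have hA_closure : ∀ s : Γ, ∃ D, D.Countable ∧ D ⊆ A s ∧ A s ⊆ closure D := by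
      intro s
      haveI := skel.metrizable_range s
      haveI : CompactSpace ↥(range (r s)) := isCompact_iff_compactSpace.mp (skel.compact_range s)
      letI : MetricSpace ↥(range (r s)) := TopologicalSpace.metrizableSpaceMetric _
      set ι : ↥(range (r s)) × ↥(range (r s)) → X × X := Prod.map Subtype.val Subtype.val with hι
      have hιcont : Continuous ι := continuous_subtype_val.prodMap continuous_subtype_val
      set T : Set (↥(range (r s)) × ↥(range (r s))) := ι ⁻¹' (A s) with hT
      obtain ⟨D₀, hD₀c, hD₀d⟩ := TopologicalSpace.exists_countable_dense ↥T
      refine ⟨(fun p : ↥T => ι p.val) '' D₀, hD₀c.image _, ?_, ?_⟩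
      · rintro _ ⟨p, -, rfl⟩
        exact p.prop
      · intro z hz
        obtain ⟨z1, hz1⟩ := (hA_sub s hz).1
        obtain ⟨z2, hz2⟩ := (hA_sub s hz).2
        have hzmem : (⟨(⟨z.1, ⟨z1, hz1⟩⟩, ⟨z.2, ⟨z2, hz2⟩⟩), by simpa [hT, hι] using hz⟩ : ↥T) ∈ closure D₀ :=
          hD₀d _
        have hcont : Continuous (fun p : ↥T => ι p.val) := hιcont.comp continuous_subtype_val
        have := image_closure_subset_closure_image (s := D₀) hcont ⟨_, hzmem, rfl⟩
        simpa [hι] using this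
    choose D hDc hDA hAD using hA_closure
    have hAne : ∀ s, (A s).Nonempty := fun s => ⟨_, ⟨(x₀, x₀), rfl, rfl⟩⟩
    have hDne : ∀ s, (D s).Nonempty := by
      intro s
      rcases (hAne s) with ⟨z, hz⟩
      have := hAD s hz
      by_contra hD
      rw [not_nonempty_iff_eq_empty.mp hD] at this
      simpa using this
    choose e he using fun s => (hDc s).exists_eq_range (hDne s)
    -- witnesses
    have hw : ∀ s n, ∃ w : X × X, w ∈ E ∧ (r s w.1, r s w.2) = e s n := by
      intro s n
      have : e s n ∈ A s := hDA s (by rw [he s]; exact mem_range_self n)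
      obtain ⟨w, hwE, hweq⟩ := this
      exact ⟨w, hwE, hweq⟩
    choose w hwE hwR using hw
    -- indices fixing the witnesses
    have hσ : ∀ s n, ∃ σ : Γ, r σ (w s n).1 = (w s n).1 ∧ r σ (w s n).2 = (w s n).2 := by
      intro s n
      obtain ⟨s1, hs1⟩ := full (w s n).1
      obtain ⟨s2, hs2⟩ := full (w s n).2
      obtain ⟨σ, hσ1, hσ2⟩ := skel.directed s1 s2
      exact ⟨σ, hfix σ _ (hrange_mono s1 σ hσ1 hs1), hfix σ _ (hrange_mono s2 σ hσ2 hs2)⟩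
    choose σ hσ1 hσ2 using hσ
    choose ub hub1 hub2 using skel.directed
    set seq : ℕ → Γ := buildSeq s₀ ub σ with hseq
    have hseq0 : seq 0 = s₀ := by rw [hseq, buildSeq]
    have hseq_succ : ∀ m, seq (m+1) = ub (seq m) (σ (seq m.unpair.1) m.unpair.2) := by
      intro m; rw [hseq]; rw [buildSeq]
    have hmono : Monotone seq := monotone_nat_of_le_succ fun m => by
      rw [hseq_succ]; exact hub1 _ _
    obtain ⟨t, htlub, htconv⟩ := skel.seq_sup seq hmono
    have hseq_le_t : ∀ m, seq m ≤ t := fun m => htlub.1 (mem_range_self m)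
    -- witnesses along the sequence are fixed by r t
    have hwfix : ∀ n k, r t (w (seq n) k).1 = (w (seq n) k).1 ∧
        r t (w (seq n) k).2 = (w (seq n) k).2 := by
      intro n k
      have h1 : σ (seq n) k ≤ t := by
        refine le_trans ?_ (hseq_le_t (Nat.pair n k + 1))
        rw [hseq_succ, Nat.unpair_pair]
        exact hub2 _ _
      have hc := (skel.comp_eq_of_le _ _ h1).1
      constructor
      · conv_lhs => rw [← hσ1 (seq n) k]
        rw [show r t (r (σ (seq n) k) (w (seq n) k).1) =
          (r t ∘ r (σ (seq n) k)) (w (seq n) k).1 from rfl, hc, hσ1]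
      · conv_lhs => rw [← hσ2 (seq n) k]
        rw [show r t (r (σ (seq n) k) (w (seq n) k).2) =
          (r t ∘ r (σ (seq n) k)) (w (seq n) k).2 from rfl, hc, hσ2]
    refine ⟨t, hseq0 ▸ hseq_le_t 0, ?_⟩
    intro x x' hxx'
    -- now the compactness argument
    haveI := skel.metrizable_range t
    haveI : CompactSpace ↥(range (r t)) := isCompact_iff_compactSpace.mp (skel.compact_range t)
    letI : MetricSpace ↥(range (r t)) := TopologicalSpace.metrizableSpaceMetric _
    have hmemx : ∀ n, r (seq n) x ∈ range (r t) :=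
      fun n => hrange_mono _ _ (hseq_le_t n) (mem_range_self x)
    have hmemx' : ∀ n, r (seq n) x' ∈ range (r t) :=
      fun n => hrange_mono _ _ (hseq_le_t n) (mem_range_self x')
    set ahat : ↥(range (r t)) × ↥(range (r t)) := (⟨r t x, mem_range_self x⟩, ⟨r t x', mem_range_self x'⟩) with hahat
    set ahatn : ℕ → ↥(range (r t)) × ↥(range (r t)) := fun n => (⟨r (seq n) x, hmemx n⟩, ⟨r (seq n) x', hmemx' n⟩) with hahatn
    have htend : Tendsto ahatn atTop (𝓝 ahat) :=
      Tendsto.prodMk_nhds (tendsto_subtype_rng.mpr (htconv x)) (tendsto_subtype_rng.mpr (htconv x'))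
    set ι : ↥(range (r t)) × ↥(range (r t)) → X × X := Prod.map Subtype.val Subtype.val with hι
    have hιcont : Continuous ι := continuous_subtype_val.prodMap continuous_subtype_val
    have hemb : Topology.IsEmbedding ι := IsEmbedding.subtypeVal.prodMap IsEmbedding.subtypeVal
    -- choose approximating points from the dense sets
    have hchoice : ∀ n : ℕ, ∃ p : ↥(range (r t)) × ↥(range (r t)),
        ι p ∈ D (seq n) ∧ dist p (ahatn n) < 1/(n+1) := by
      intro n
      have hpt : ι (ahatn n) ∈ closure (D (seq n)) := by
        refine hAD (seq n) ⟨(x, x'), hxx', ?_⟩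
        simp [hι, hahatn]
      have hpos : (0:ℝ) < 1/(n+1) := by positivity
      have hball : Metric.ball (ahatn n) (1/(n+1)) ∈ 𝓝 (ahatn n) := by
        exact Metric.ball_mem_nhds _ hpos
      rw [hemb.nhds_eq_comap, mem_comap] at hball
      obtain ⟨V, hV, hVsub⟩ := hball
      obtain ⟨d, hdV, hdD⟩ := mem_closure_iff_nhds.mp hpt V hV
      have hdA := hDA (seq n) hdD
      obtain ⟨hd1, hd2⟩ := hA_sub (seq n) hdA
      have hd1' : d.1 ∈ range (r t) := hrange_mono _ _ (hseq_le_t n) hd1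
      have hd2' : d.2 ∈ range (r t) := hrange_mono _ _ (hseq_le_t n) hd2
      refine ⟨(⟨d.1, hd1'⟩, ⟨d.2, hd2'⟩), ?_, ?_⟩
      · simpa [hι] using hdD
      · have : ι (⟨d.1, hd1'⟩, ⟨d.2, hd2'⟩) ∈ V := by simpa [hι] using hdV
        have := hVsub this
        rw [Metric.mem_ball] at this
        exact this
    choose p hpD hpdist using hchoice
    -- p n converges to ahat
    have h2' : Tendsto (fun n => dist (ahatn n) ahat) atTop (𝓝 0) := by
      exact tendsto_iff_dist_tendsto_zero.mp htend
    have hb : Tendsto (fun n : ℕ => 1/(n+1) + dist (ahatn n) ahat) atTop (𝓝 0) := by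
      have h1 : Tendsto (fun n : ℕ => (1:ℝ)/(n+1)) atTop (𝓝 0) :=
        tendsto_one_div_add_atTop_nhds_zero_nat
      simpa using h1.add h2'
    have hdist0 : Tendsto (fun n => dist (p n) ahat) atTop (𝓝 0) := by
      refine squeeze_zero (fun n => dist_nonneg) (fun n => ?_) hb
      calc dist (p n) ahat ≤ dist (p n) (ahatn n) + dist (ahatn n) ahat := dist_triangle _ _ _
        _ ≤ 1/(n+1) + dist (ahatn n) ahat := by
            have := le_of_lt (hpdist n); linarith
    have hptend : Tendsto p atTop (𝓝 ahat) := by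
      exact tendsto_iff_dist_tendsto_zero.mpr hdist0
    have hpXtend : Tendsto (fun n => ι (p n)) atTop (𝓝 (r t x, r t x')) := by
      have := (hιcont.tendsto ahat).comp hptend
      simpa [hι, hahat, Function.comp_def] using this
    -- witness sequence
    have hkk : ∀ n, ∃ k, e (seq n) k = ι (p n) := by
      intro n
      have := hpD n
      rw [he (seq n)] at this
      obtain ⟨k, hk⟩ := this
      exact ⟨k, hk⟩
    choose kk hkkeq using hkk
    set wn : ℕ → X × X := fun n => w (seq n) (kk n) with hwn
    have hwnE : ∀ n, wn n ∈ E := fun n => hwE _ _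
    have hwnR : ∀ n, (r (seq n) (wn n).1, r (seq n) (wn n).2) = ι (p n) := by
      intro n; rw [hwn]; rw [hwR, hkkeq]
    have hwnfix : ∀ n, r t (wn n).1 = (wn n).1 ∧ r t (wn n).2 = (wn n).2 := fun n => hwfix n (kk n)
    -- cluster point
    set S : Set (X × X) := range (r t) ×ˢ range (r t) with hS
    have hScomp : IsCompact S := (skel.compact_range t).prod (skel.compact_range t)
    have hwnS : ∀ n, wn n ∈ S := by
      intro n
      exact ⟨(hwnfix n).1 ▸ mem_range_self _, (hwnfix n).2 ▸ mem_range_self _⟩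
    have hle : map wn atTop ≤ 𝓟 S :=
      le_principal_iff.mpr (mem_map.mpr (Eventually.of_forall hwnS))
    obtain ⟨wl, hwlS, hwlcl⟩ := hScomp.exists_clusterPt hle
    have hwlE : wl ∈ E := by
      have hleE : map wn atTop ≤ 𝓟 E :=
        le_principal_iff.mpr (mem_map.mpr (Eventually.of_forall hwnE))
      have := mem_closure_iff_clusterPt.mpr (hwlcl.mono hleE)
      rwa [hEclosed.closure_eq] at this
    -- identify r (seq m) of the cluster point
    have key : ∀ m, r (seq m) wl.1 = r (seq m) x ∧ r (seq m) wl.2 = r (seq m) x' := by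
      intro m
      set gm : X × X → X × X := fun z => (r (seq m) z.1, r (seq m) z.2) with hgm
      have hgmcont : Continuous gm :=
        ((skel.continuous _).comp continuous_fst).prodMk ((skel.continuous _).comp continuous_snd)
      have hclg : ClusterPt (gm wl) (map (gm ∘ wn) atTop) := by
        have := hwlcl.map hgmcont.continuousAt (tendsto_map (f := gm))
        rwa [map_map] at this
      have hTend : Tendsto (gm ∘ wn) atTop (𝓝 (r (seq m) x, r (seq m) x')) := by
        have heq : ∀ n ≥ m, (gm ∘ wn) n = gm (ι (p n)) := by
          intro n hnm
          have hcomp := (skel.comp_eq_of_le _ _ (hmono hnm)).2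
          have e1 : r (seq m) (wn n).1 = r (seq m) (r (seq n) (wn n).1) := by
            have := congrFun hcomp (wn n).1
            simpa using this.symm
          have e2 : r (seq m) (wn n).2 = r (seq m) (r (seq n) (wn n).2) := by
            have := congrFun hcomp (wn n).2
            simpa using this.symm
          have := hwnR n
          simp only [Function.comp_apply, hgm]
          rw [e1, e2, show r (seq n) (wn n).1 = (ι (p n)).1 from congrArg Prod.fst this,
            show r (seq n) (wn n).2 = (ι (p n)).2 from congrArg Prod.snd this]
        have hlim : Tendsto (fun n => gm (ι (p n))) atTop (𝓝 (gm (r t x, r t x'))) :=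
          (hgmcont.tendsto _).comp hpXtend
        have hgmval : gm (r t x, r t x') = (r (seq m) x, r (seq m) x') := by
          have hcomp := (skel.comp_eq_of_le _ _ (hseq_le_t m)).2
          have e1 := congrFun hcomp x
          have e2 := congrFun hcomp x'
          simp only [Function.comp_apply] at e1 e2
          simp [hgm, e1, e2]
        rw [hgmval] at hlim
        refine hlim.congr' ?_
        filter_upwards [eventually_ge_atTop m] with n hn
        exact (heq n hn).symm
      have hne2 : (𝓝 (gm wl) ⊓ 𝓝 (r (seq m) x, r (seq m) x')).NeBot :=
        hclg.neBot.mono (inf_le_inf_left _ hTend)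
      have := eq_of_nhds_neBot hne2
      exact ⟨congrArg Prod.fst this, congrArg Prod.snd this⟩
    -- conclude wl = (r t x, r t x')
    have hwl1 : wl.1 = r t x := by
      have hfix1 : r t wl.1 = wl.1 := hfix t _ hwlS.1
      have h1 : Tendsto (fun m => r (seq m) wl.1) atTop (𝓝 wl.1) := by
        have := htconv wl.1; rwa [hfix1] at this
      have h2 : Tendsto (fun m => r (seq m) wl.1) atTop (𝓝 (r t x)) := by
        have := htconv x
        refine this.congr fun m => (key m).1.symm
      exact tendsto_nhds_unique h1 h2
    have hwl2 : wl.2 = r t x' := by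
      have hfix2 : r t wl.2 = wl.2 := hfix t _ hwlS.2
      have h1 : Tendsto (fun m => r (seq m) wl.2) atTop (𝓝 wl.2) := by
        have := htconv wl.2; rwa [hfix2] at this
      have h2 : Tendsto (fun m => r (seq m) wl.2) atTop (𝓝 (r t x')) := by
        have := htconv x'
        refine this.congr fun m => (key m).2.symm
      exact tendsto_nhds_unique h1 h2
    have := hwlE
    rw [hE] at this
    rw [← hwl1, ← hwl2]
    exact this
  -- construct the skeleton on Y
  choose g hg using hf.surjective
  refine ⟨{s : Γ // Good s}, inferInstance, fun s y => f (r s.val (g y)), ?_, ?_⟩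
  · have hq : ∀ (s : {s : Γ // Good s}) (x : X), f (r s.val (g (f x))) = f (r s.val x) :=
      fun s x => s.prop (g (f x)) x (hg (f x))
    constructor
    · obtain ⟨s⟩ := skel.nonempty
      obtain ⟨t, -, ht⟩ := cof s
      exact ⟨⟨t, ht⟩⟩
    · rintro ⟨s, hs⟩ ⟨t, ht⟩
      obtain ⟨v, hv1, hv2⟩ := skel.directed s t
      obtain ⟨d, hvd, hd⟩ := cof v
      exact ⟨⟨d, hd⟩, Subtype.mk_le_mk.mpr (le_trans hv1 hvd), Subtype.mk_le_mk.mpr (le_trans hv2 hvd)⟩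
    · intro s
      rw [hf.continuous_iff]
      have : (fun y => f (r s.val (g y))) ∘ f = f ∘ r s.val := funext fun x => hq s x
      rw [this]
      exact hf.continuous.comp (skel.continuous _)
    · intro s
      funext y
      simp only [Function.comp_apply]
      rw [hq s (r s.val (g y))]
      congr 1
      exact congrFun (skel.retraction s.val) (g y)
    · intro s
      have hr : range (fun y => f (r s.val (g y))) = f '' range (r s.val) := by
        apply Set.eq_of_subset_of_subset
        · rintro _ ⟨y, rfl⟩
          exact ⟨r s.val (g y), mem_range_self _, rfl⟩
        · rintro _ ⟨_, ⟨x, rfl⟩, rfl⟩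
          exact ⟨f x, hq s x⟩
      rw [hr]
      exact (skel.compact_range s.val).image hf.continuous
    · intro s
      have hr : range (fun y => f (r s.val (g y))) = f '' range (r s.val) := by
        apply Set.eq_of_subset_of_subset
        · rintro _ ⟨y, rfl⟩
          exact ⟨r s.val (g y), mem_range_self _, rfl⟩
        · rintro _ ⟨_, ⟨x, rfl⟩, rfl⟩
          exact ⟨f x, hq s x⟩
      rw [hr]
      haveI := skel.metrizable_range s.val
      haveI : CompactSpace ↥(range (r s.val)) :=
        isCompact_iff_compactSpace.mp (skel.compact_range s.val)
      exact metrizable_of_image (C := ↥(range (r s.val)))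
        (h := fun c => (⟨f c.val, mem_image_of_mem f c.prop⟩ : ↥(f '' range (r s.val))))
        (Continuous.subtype_mk (hf.continuous.comp continuous_subtype_val) _)
        (by rintro ⟨_, x, hx, rfl⟩; exact ⟨⟨x, hx⟩, rfl⟩)
    · intro s t hst
      constructor
      · funext y
        show f (r t.val (g (f (r s.val (g y))))) = f (r s.val (g y))
        rw [hq t (r s.val (g y))]
        congr 1
        exact congrFun (skel.comp_eq_of_le s.val t.val hst).1 (g y)
      · funext y
        show f (r s.val (g (f (r t.val (g y))))) = f (r s.val (g y))
        rw [hq s (r t.val (g y))]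
        congr 1
        exact congrFun (skel.comp_eq_of_le s.val t.val hst).2 (g y)
    · intro u hu
      obtain ⟨t, hlub, hconv⟩ := skel.seq_sup (fun n => (u n).val)
        (fun a b hab => hu hab)
      have hgood : Good t := by
        intro x x' hxx'
        have h1 : Tendsto (fun n => f (r (u n).val x)) atTop (𝓝 (f (r t x))) :=
          (hf.continuous.tendsto _).comp (hconv x)
        have h2 : Tendsto (fun n => f (r (u n).val x')) atTop (𝓝 (f (r t x'))) :=
          (hf.continuous.tendsto _).comp (hconv x')
        have heq : (fun n => f (r (u n).val x)) = fun n => f (r (u n).val x') :=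
          funext fun n => (u n).prop x x' hxx'
        exact tendsto_nhds_unique (heq ▸ h1) h2
      refine ⟨⟨t, hgood⟩, ⟨?_, ?_⟩, ?_⟩
      · rintro _ ⟨n, rfl⟩
        exact Subtype.coe_le_coe.mp (hlub.1 ⟨n, rfl⟩)
      · rintro ⟨b, hb⟩ hub
        refine Subtype.coe_le_coe.mp (hlub.2 ?_)
        rintro _ ⟨n, rfl⟩
        exact Subtype.coe_le_coe.mpr (hub ⟨n, rfl⟩)
      · intro y
        exact (hf.continuous.tendsto _).comp (hconv (g y))
    · -- tendsto_id
      intro y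
      have h0 : Tendsto (fun s : {s : Γ // Good s} => s.val) atTop atTop := by
        rw [tendsto_atTop]
        intro b
        obtain ⟨d, hbd, hdg⟩ := cof b
        filter_upwards [Filter.mem_atTop (⟨d, hdg⟩ : {s : Γ // Good s})] with s hs
        exact le_trans hbd (Subtype.coe_le_coe.mpr hs)
      have h1 : Tendsto (fun s : {s : Γ // Good s} => r s.val (g y)) atTop (𝓝 (g y)) :=
        (skel.tendsto_id (g y)).comp h0
      have h2 := (hf.continuous.tendsto (g y)).comp h1
      have h3 : (fun s : {s : Γ // Good s} => f (r s.val (g y))) = f ∘ (fun s : {s : Γ // Good s} => r s.val (g y)) := rfl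
      rw [show f (g y) = y from hg y] at h2
      exact h2
  · intro y
    obtain ⟨s, hs⟩ := full (g y)
    obtain ⟨d, hsd, hdg⟩ := cof s
    refine ⟨⟨d, hdg⟩, y, ?_⟩
    have h1 : r s (g y) = g y := hfix s _ hs
    have h2 : r d (g y) = g y := by
      conv_lhs => rw [← h1]
      rw [show r d (r s (g y)) = (r d ∘ r s) (g y) from rfl,
        (skel.comp_eq_of_le s d hsd).1, h1]
    simp only [h2]
    exact hg y
end

section
/- Let X be a non-commutative Corson countably compact space. Then the Aleksandrov duplicate AD(X) is a non-commutative Corson countably compact space. -/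
open Filter Topology Set

universe u

/-- The topology of the Aleksandrov duplicate of `X` on `X x Bool`: every point
`(x, true)` is isolated and a neighborhood basis at `(x, false)` is given by the sets
`(U x {false, true}) \ {(x, true)}` for `U` a neighborhood of `x`. -/
def ADTopology (X : Type u) [TopologicalSpace X] : TopologicalSpace (X × Bool) where
  IsOpen V := ∀ x : X, (x, false) ∈ V →
    ∃ U : Set X, IsOpen U ∧ x ∈ U ∧ (U ×ˢ (Set.univ : Set Bool)) \ {(x, true)} ⊆ V
  isOpen_univ := fun x _ => ⟨Set.univ, isOpen_univ, trivial, fun _ _ => trivial⟩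
  isOpen_inter := by
    intro V W hV hW x hx
    obtain ⟨U1, hU1, hxU1, hsub1⟩ := hV x hx.1
    obtain ⟨U2, hU2, hxU2, hsub2⟩ := hW x hx.2
    refine ⟨U1 ∩ U2, hU1.inter hU2, ⟨hxU1, hxU2⟩, fun p hp => ?_⟩
    exact ⟨hsub1 ⟨⟨hp.1.1.1, hp.1.2⟩, hp.2⟩, hsub2 ⟨⟨hp.1.1.2, hp.1.2⟩, hp.2⟩⟩
  isOpen_sUnion := by
    intro S hS x hx
    obtain ⟨V, hVS, hxV⟩ := hx
    obtain ⟨U, hU, hxU, hsub⟩ := hS V hVS x hxV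
    exact ⟨U, hU, hxU, hsub.trans (Set.subset_sUnion_of_mem hVS)⟩

section ADS

variable {X : Type u} [TopologicalSpace X]

/-- Type synonym carrying the Aleksandrov-duplicate topology. -/
abbrev ADS (X : Type u) [TopologicalSpace X] : Type u := X × Bool

instance : TopologicalSpace (ADS X) := ADTopology X

namespace ADS

lemma ne_true_of_false {a b : X} : ((a, false) : ADS X) ≠ ((b, true) : ADS X) :=
  fun h => Bool.noConfusion (show false = true from congrArg Prod.snd h)

lemma isOpen_iff {V : Set (ADS X)} :
    IsOpen V ↔ ∀ x : X, ((x, false) : ADS X) ∈ V →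
      ∃ U : Set X, IsOpen U ∧ x ∈ U ∧
        (U ×ˢ (Set.univ : Set Bool)) \ {((x, true) : ADS X)} ⊆ V := Iff.rfl

lemma isOpen_true {V : Set (ADS X)} (h : ∀ p ∈ V, p.2 = true) : IsOpen V :=
  isOpen_iff.2 fun x hx => absurd (h _ hx) (by simp)

lemma isOpen_base {U : Set X} (hU : IsOpen U) : IsOpen {p : ADS X | p.1 ∈ U} :=
  isOpen_iff.2 fun x hx => ⟨U, hU, hx, fun p hp => hp.1.1⟩

lemma isOpen_diff_true [T1Space X] {V : Set (ADS X)} (hV : IsOpen V) {F : Set X}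
    (hF : F.Finite) : IsOpen (V \ {p : ADS X | p.2 = true ∧ p.1 ∈ F}) := by
  rw [isOpen_iff] at hV ⊢
  intro x hx
  obtain ⟨U, hUo, hxU, hsub⟩ := hV x hx.1
  refine ⟨U ∩ (F \ {x})ᶜ, hUo.inter (hF.subset diff_subset).isClosed.isOpen_compl,
    ⟨hxU, fun h => h.2 rfl⟩, ?_⟩
  rintro ⟨y, b⟩ ⟨⟨⟨hyU, hyF⟩, -⟩, hne⟩
  refine ⟨hsub ⟨⟨hyU, trivial⟩, hne⟩, ?_⟩
  rintro ⟨hb, hyF'⟩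
  have hyx : y = x := by
    by_contra hxy
    exact hyF ⟨hyF', hxy⟩
  subst hyx
  subst hb
  exact hne rfl

lemma continuous_fst' : Continuous (fun p : ADS X => p.1) :=
  continuous_def.2 fun U hU => isOpen_base hU

/-- The embedding of `X` as the non-isolated copy. -/
def mkFalse (x : X) : ADS X := (x, false)

lemma continuous_mkFalse : Continuous (mkFalse (X := X)) := by
  rw [continuous_def]
  intro V hV
  rw [isOpen_iff_forall_mem_open]
  intro x hx
  obtain ⟨U, hUo, hxU, hsub⟩ := isOpen_iff.1 hV x hx
  refine ⟨U, fun y hy => hsub ⟨⟨hy, trivial⟩, by simp [mkFalse]⟩, hUo, hxU⟩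

lemma tendsto_false {ι : Type*} {l : Filter ι} {f : ι → ADS X} {y : X}
    (h1 : Tendsto (fun i => (f i).1) l (nhds y))
    (h2 : ∀ᶠ i in l, f i ≠ ((y, true) : ADS X)) :
    Tendsto f l (nhds ((y, false) : ADS X)) := by
  rw [tendsto_nhds]
  intro V hV hyV
  obtain ⟨U, hUo, hyU, hsub⟩ := isOpen_iff.1 hV y hyV
  filter_upwards [tendsto_nhds.1 h1 U hUo hyU, h2] with i hiU hine
  exact hsub ⟨⟨hiU, trivial⟩, hine⟩

lemma tendsto_of_eventually_eq {ι : Type*} {l : Filter ι} {f : ι → ADS X} {z : ADS X}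
    (h : ∀ᶠ i in l, f i = z) : Tendsto f l (nhds z) := by
  rw [tendsto_nhds]
  intro V _ hz
  filter_upwards [h] with i hi
  exact Set.mem_preimage.2 (by rw [hi]; exact hz)

instance [T2Space X] : T2Space (ADS X) := by
  constructor
  rintro ⟨x, b⟩ ⟨y, c⟩ hpq
  by_cases hxy : x = y
  · subst hxy
    have hbc : b ≠ c := fun h => hpq (by rw [h])
    have h1 : IsOpen {p : ADS X | p.2 = true ∧ p.1 ∈ ({x} : Set X)} :=
      isOpen_true fun p hp => hp.1
    have h2 : IsOpen ((Set.univ : Set (ADS X)) \ {p : ADS X | p.2 = true ∧ p.1 ∈ ({x} : Set X)}) :=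
      isOpen_diff_true isOpen_univ (Set.finite_singleton x)
    have hd : Disjoint ((Set.univ : Set (ADS X)) \ {p : ADS X | p.2 = true ∧ p.1 ∈ ({x} : Set X)})
        {p : ADS X | p.2 = true ∧ p.1 ∈ ({x} : Set X)} :=
      Set.disjoint_left.2 fun p hp1 hp2 => hp1.2 hp2
    cases b <;> cases c
    · exact absurd rfl hbc
    · exact ⟨_, _, h2, h1, ⟨trivial, fun h => by simp at h⟩, ⟨rfl, rfl⟩, hd⟩
    · exact ⟨_, _, h1, h2, ⟨rfl, rfl⟩, ⟨trivial, fun h => by simp at h⟩, hd.symm⟩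
    · exact absurd rfl hbc
  · obtain ⟨U, V, hUo, hVo, hxU, hyV, hUV⟩ := t2_separation hxy
    refine ⟨{p : ADS X | p.1 ∈ U}, {p : ADS X | p.1 ∈ V}, isOpen_base hUo, isOpen_base hVo,
      hxU, hyV, ?_⟩
    rw [Set.disjoint_left]
    intro p hpU hpV
    exact Set.disjoint_left.1 hUV hpU hpV

end ADS

end ADS
namespace ADS

variable {X : Type u} [TopologicalSpace X]

open Classical in
/-- The duplicate of a retraction `rs`, keeping the isolated points above `A` fixed. -/
noncomputable def dup (rs : X → X) (A : Set X) : ADS X → ADS X :=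
  fun z => if z.2 = true ∧ z.1 ∈ A then z else (rs z.1, false)

lemma dup_false (rs : X → X) (A : Set X) (x : X) :
    dup rs A (x, false) = ((rs x, false) : ADS X) := by
  simp [dup]

lemma dup_true_mem {rs : X → X} {A : Set X} {x : X} (h : x ∈ A) :
    dup rs A (x, true) = ((x, true) : ADS X) := by
  simp [dup, h]

lemma dup_true_not_mem {rs : X → X} {A : Set X} {x : X} (h : x ∉ A) :
    dup rs A (x, true) = ((rs x, false) : ADS X) := by
  simp [dup, h]

lemma comp_app_eq {f g h : X → X} (hfg : f ∘ g = h) (x : X) : f (g x) = h x :=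
  congrFun hfg x

lemma fix_of_mem_range {rs : X → X} (hret : rs ∘ rs = rs) {x : X}
    (h : x ∈ Set.range rs) : rs x = x := by
  obtain ⟨y, rfl⟩ := h
  exact congrFun hret y

lemma dup_idem {rs : X → X} (hret : rs ∘ rs = rs) (A : Set X) :
    dup rs A ∘ dup rs A = dup rs A := by
  funext z
  obtain ⟨x, b⟩ := z
  cases b
  · simp only [Function.comp_apply, dup_false]
    rw [comp_app_eq hret x]
  · by_cases h : x ∈ A
    · simp only [Function.comp_apply, dup_true_mem h]
    · simp only [Function.comp_apply, dup_true_not_mem h, dup_false, comp_app_eq hret x]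

lemma dup_comp_le {rs rt : X → X} {A B : Set X}
    (h1 : rt ∘ rs = rs) (h2 : rs ∘ rt = rs) (hAB : A ⊆ B) :
    dup rt B ∘ dup rs A = dup rs A ∧ dup rs A ∘ dup rt B = dup rs A := by
  constructor
  · funext z
    obtain ⟨x, b⟩ := z
    cases b
    · simp only [Function.comp_apply, dup_false]
      rw [comp_app_eq h1 x]
    · by_cases h : x ∈ A
      · simp only [Function.comp_apply, dup_true_mem h, dup_true_mem (hAB h)]
      · simp only [Function.comp_apply, dup_true_not_mem h, dup_false, comp_app_eq h1 x]
  · funext z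
    obtain ⟨x, b⟩ := z
    cases b
    · simp only [Function.comp_apply, dup_false]
      rw [comp_app_eq h2 x]
    · by_cases h : x ∈ B
      · simp only [Function.comp_apply, dup_true_mem h]
      · rw [Function.comp_apply, dup_true_not_mem h, dup_false,
          dup_true_not_mem (fun hx => h (hAB hx)), comp_app_eq h2 x]

lemma continuous_dup [T1Space X] {rs : X → X} (hc : Continuous rs) {A : Set X}
    (hfix : ∀ a ∈ A, rs a = a) : Continuous (dup rs A) := by
  rw [continuous_def]
  intro V hV
  rw [isOpen_iff] at hV ⊢
  intro x hx
  rw [Set.mem_preimage, dup_false] at hx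
  obtain ⟨U, hUo, hrsU, hsub⟩ := hV (rs x) hx
  by_cases hxx : rs x = x
  · refine ⟨rs ⁻¹' U, hUo.preimage hc, by rw [Set.mem_preimage]; exact hrsU, ?_⟩
    rintro ⟨y, b⟩ ⟨⟨hyU, -⟩, hne⟩
    rw [Set.mem_preimage]
    by_cases hcz : b = true ∧ y ∈ A
    · obtain ⟨hb, hyA⟩ := hcz
      subst hb
      rw [dup_true_mem hyA]
      have hfy : rs y = y := hfix y hyA
      refine hsub ⟨⟨by rw [← hfy]; exact hyU, trivial⟩, ?_⟩
      rw [hxx]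
      exact hne
    · have : dup rs A (y, b) = ((rs y, false) : ADS X) := by
        cases b
        · exact dup_false rs A y
        · exact dup_true_not_mem fun hyA => hcz ⟨rfl, hyA⟩
      rw [this]
      exact hsub ⟨⟨hyU, trivial⟩, by simp⟩
  · refine ⟨rs ⁻¹' U ∩ {rs x}ᶜ, (hUo.preimage hc).inter isOpen_compl_singleton,
      ⟨hrsU, fun h => hxx h.symm⟩, ?_⟩
    rintro ⟨y, b⟩ ⟨⟨⟨hyU, hyne⟩, -⟩, -⟩
    rw [Set.mem_preimage]
    by_cases hcz : b = true ∧ y ∈ A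
    · obtain ⟨hb, hyA⟩ := hcz
      subst hb
      rw [dup_true_mem hyA]
      have hfy : rs y = y := hfix y hyA
      refine hsub ⟨⟨by rw [← hfy]; exact hyU, trivial⟩, ?_⟩
      simp only [Set.mem_singleton_iff, Prod.mk.injEq]
      rintro ⟨h, -⟩
      exact hyne h
    · have : dup rs A (y, b) = ((rs y, false) : ADS X) := by
        cases b
        · exact dup_false rs A y
        · exact dup_true_not_mem fun hyA => hcz ⟨rfl, hyA⟩
      rw [this]
      exact hsub ⟨⟨hyU, trivial⟩, by simp⟩

lemma range_dup {rs : X → X} (hret : rs ∘ rs = rs) {A : Set X} (hA : A ⊆ Set.range rs) :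
    Set.range (dup rs A) =
      {p : ADS X | p.1 ∈ Set.range rs ∧ p.2 = false} ∪ {p : ADS X | p.1 ∈ A ∧ p.2 = true} := by
  ext p
  constructor
  · rintro ⟨⟨y, b⟩, rfl⟩
    cases b
    · rw [dup_false]
      exact Or.inl ⟨Set.mem_range_self y, rfl⟩
    · by_cases h : y ∈ A
      · rw [dup_true_mem h]
        exact Or.inr ⟨h, rfl⟩
      · rw [dup_true_not_mem h]
        exact Or.inl ⟨Set.mem_range_self y, rfl⟩
  · rintro (⟨hp1, hp2⟩ | ⟨hp1, hp2⟩)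
    · refine ⟨(p.1, false), ?_⟩
      rw [dup_false, fix_of_mem_range hret hp1]
      exact Prod.ext rfl hp2.symm
    · refine ⟨(p.1, true), ?_⟩
      rw [dup_true_mem hp1]
      exact Prod.ext rfl hp2.symm

end ADS
namespace ADS

variable {X : Type u} [TopologicalSpace X]

lemma exists_nice_nbhd {W : Set (ADS X)} (hWo : IsOpen W) {x : X}
    (hxW : ((x, false) : ADS X) ∈ W) :
    ∃ U : Set X, IsOpen U ∧ x ∈ U ∧ ∀ b ∈ U, b ≠ x → ((b, true) : ADS X) ∈ W := by
  obtain ⟨U, hUo, hxU, hsub⟩ := isOpen_iff.1 hWo x hxW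
  refine ⟨U, hUo, hxU, fun b hb hbx => hsub ⟨⟨hb, trivial⟩, ?_⟩⟩
  simp only [Set.mem_singleton_iff, Prod.mk.injEq]
  rintro ⟨h, -⟩
  exact hbx h

section Compact

variable [T2Space X]

lemma isCompact_range_dup {rs : X → X} (hc : Continuous rs) (hret : rs ∘ rs = rs)
    (hcomp : IsCompact (Set.range rs)) {A : Set X} (hA : A ⊆ Set.range rs) :
    IsCompact (Set.range (dup rs A)) := by
  classical
  rw [range_dup hret hA]
  apply isCompact_of_finite_subcover
  intro ι 𝒰 h𝒰 hcov
  have hK : IsCompact (mkFalse '' Set.range rs) :=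
    hcomp.image continuous_mkFalse
  have hKsub : mkFalse '' Set.range rs ⊆ ⋃ i, 𝒰 i := by
    rintro p ⟨y, hy, rfl⟩
    exact hcov (Or.inl ⟨hy, rfl⟩)
  obtain ⟨t, ht⟩ := hK.elim_finite_subcover 𝒰 h𝒰 hKsub
  set W : Set (ADS X) := ⋃ i ∈ t, 𝒰 i with hWdef
  have hWo : IsOpen W := isOpen_biUnion fun i _ => h𝒰 i
  have hWfalse : ∀ x ∈ Set.range rs, ((x, false) : ADS X) ∈ W := fun x hx =>
    ht ⟨x, hx, rfl⟩
  set S : Set X := {a | a ∈ A ∧ ((a, true) : ADS X) ∉ W} with hSdef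
  have hSsub : S ⊆ Set.range rs := fun a ha => hA ha.1
  have hnb : ∀ x ∈ Set.range rs, ∃ U : Set X, IsOpen U ∧ x ∈ U ∧ ∀ b ∈ U, b ∈ S → b = x := by
    intro x hx
    obtain ⟨U, hUo, hxU, hU⟩ := exists_nice_nbhd hWo (hWfalse x hx)
    refine ⟨U, hUo, hxU, fun b hbU hbS => ?_⟩
    by_contra hne
    exact hbS.2 (hU b hbU hne)
  have hScl : IsClosed S := by
    rw [← closure_subset_iff_isClosed]
    intro x hx
    have hxr : x ∈ Set.range rs := closure_minimal hSsub hcomp.isClosed hx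
    obtain ⟨U, hUo, hxU, hU⟩ := hnb x hxr
    obtain ⟨b, hbU, hbS⟩ := mem_closure_iff.1 hx U hUo hxU
    rwa [← hU b hbU hbS]
  have hScomp : IsCompact S := hcomp.of_isClosed_subset hScl hSsub
  have hSfin : S.Finite := by
    have key : ∀ a : ↥S, ∃ U : Set X, IsOpen U ∧ (a : X) ∈ U ∧ ∀ b ∈ U, b ∈ S → b = (a : X) :=
      fun a => hnb a (hSsub a.2)
    choose U hUo hmem huniq using key
    obtain ⟨t2, ht2⟩ := hScomp.elim_finite_subcover U hUo
      (fun a ha => Set.mem_iUnion.2 ⟨⟨a, ha⟩, hmem _⟩)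
    apply Set.Finite.subset (t2.finite_toSet.image (Subtype.val))
    intro a ha
    obtain ⟨i, hi, hai⟩ := Set.mem_iUnion₂.1 (ht2 ha)
    exact ⟨i, hi, (huniq i a hai ha).symm⟩
  have hFfin : ({p : ADS X | p.1 ∈ S ∧ p.2 = true}).Finite := by
    apply Set.Finite.subset (hSfin.image (fun a => ((a, true) : ADS X)))
    rintro ⟨y, b⟩ ⟨hy, hb⟩
    have hb' : b = true := hb
    subst hb'
    exact ⟨y, hy, rfl⟩
  obtain ⟨t3, ht3⟩ := hFfin.isCompact.elim_finite_subcover 𝒰 h𝒰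
    (fun p hp => hcov (Or.inr ⟨hp.1.1, hp.2⟩))
  refine ⟨t ∪ t3, fun p hp => ?_⟩
  have hmono : ∀ (t' : Finset ι), t' ⊆ t ∪ t3 → p ∈ ⋃ i ∈ t', 𝒰 i → p ∈ ⋃ i ∈ t ∪ t3, 𝒰 i := by
    intro t' hsub hp
    obtain ⟨i, hi, hpi⟩ := Set.mem_iUnion₂.1 hp
    exact Set.mem_iUnion₂.2 ⟨i, hsub hi, hpi⟩
  rcases hp with hleft | hright
  · refine hmono t Finset.subset_union_left (ht ⟨p.1, hleft.1, ?_⟩)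
    exact Prod.ext rfl hleft.2.symm
  · by_cases hpW : p ∈ W
    · exact hmono t Finset.subset_union_left hpW
    · refine hmono t3 Finset.subset_union_right (ht3 ?_)
      have hpS : p.1 ∈ S := ⟨hright.1, fun h => hpW (by rwa [show ((p.1, true) : ADS X) = p from Prod.ext rfl hright.2.symm] at h)⟩
      exact ⟨hpS, hright.2⟩

end Compact

end ADS
namespace ADS

variable {X : Type u} [TopologicalSpace X]

section Metr

variable [T2Space X]

lemma metrizable_range_dup {rs : X → X} (hc : Continuous rs) (hret : rs ∘ rs = rs)
    (hcomp : IsCompact (Set.range rs)) {A : Set X} (hA : A ⊆ Set.range rs)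
    (hcnt : A.Countable)
    (hmetr : TopologicalSpace.MetrizableSpace ↥(Set.range rs)) :
    TopologicalSpace.MetrizableSpace ↥(Set.range (dup rs A)) := by
  classical
  haveI := hmetr
  obtain ⟨f, hf⟩ := Set.countable_iff_exists_injective.1 hcnt
  set w : X → ℝ := fun a => if h : a ∈ A then 1 / ((f ⟨a, h⟩ : ℝ) + 1) else 0 with hwdef
  have hwnonneg : ∀ a, 0 ≤ w a := by
    intro a
    rw [hwdef]
    dsimp only
    split
    · positivity
    · exact le_refl 0
  have hwpos : ∀ a ∈ A, 0 < w a := by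
    intro a ha
    rw [hwdef]
    dsimp only
    rw [dif_pos ha]
    positivity
  set g : ADS X → ℝ := fun p => if p.2 = true then w p.1 else 0 with hgdef
  have hgnonneg : ∀ p, 0 ≤ g p := by
    intro p
    rw [hgdef]
    dsimp only
    split
    · exact hwnonneg _
    · exact le_refl 0
  have hcg : Continuous g := by
    rw [continuous_iff_continuousAt]
    rintro ⟨x, b⟩
    cases b
    · have hg0 : g (x, false) = 0 := by simp [hgdef]
      rw [ContinuousAt, hg0, Metric.tendsto_nhds]
      intro ε hε
      set N : ℕ := Nat.ceil (1 / ε) with hNdef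
      set F : Set X := {a | a ∈ A ∧ ε ≤ w a} with hFdef
      have hFfin : F.Finite := by
        have hsub : F ⊆ Subtype.val '' {a : ↥A | f a < N + 1} := by
          rintro a ⟨haA, haw⟩
          refine ⟨⟨a, haA⟩, ?_, rfl⟩
          have hw : w a = 1 / ((f ⟨a, haA⟩ : ℝ) + 1) := by
            rw [hwdef]; dsimp only; rw [dif_pos haA]
          have hpos : (0 : ℝ) < (f ⟨a, haA⟩ : ℝ) + 1 := by positivity
          have h1 : ε * ((f ⟨a, haA⟩ : ℝ) + 1) ≤ 1 := by
            rw [hw, le_div_iff₀ hpos] at haw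
            linarith
          have h2 : ((f ⟨a, haA⟩ : ℝ) + 1) ≤ 1 / ε := by
            rw [le_div_iff₀ hε]
            nlinarith
          have h3 : ((f ⟨a, haA⟩ : ℝ) + 1) ≤ (N : ℝ) := le_trans h2 (Nat.le_ceil _)
          have h4 : (f ⟨a, haA⟩ : ℝ) < (N : ℝ) + 1 := by linarith
          exact_mod_cast h4
        refine Set.Finite.subset (Set.Finite.image _ ?_) hsub
        have : {a : ↥A | f a < N + 1} = f ⁻¹' (Set.Iio (N + 1)) := rfl
        rw [this]
        exact (Set.finite_Iio _).preimage hf.injOn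
      have hOo : IsOpen ((Set.univ : Set (ADS X)) \ {p : ADS X | p.2 = true ∧ p.1 ∈ F}) :=
        isOpen_diff_true isOpen_univ hFfin
      have hxO : ((x, false) : ADS X) ∈
          (Set.univ : Set (ADS X)) \ {p : ADS X | p.2 = true ∧ p.1 ∈ F} := by
        refine ⟨trivial, ?_⟩
        rintro ⟨h, -⟩
        simp at h
      filter_upwards [hOo.mem_nhds hxO] with p hp
      rw [Real.dist_eq, sub_zero, abs_of_nonneg (hgnonneg p)]
      rcases Bool.eq_false_or_eq_true p.2 with hb | hb
      · have hgp : g p = w p.1 := by rw [hgdef]; dsimp only; rw [if_pos hb]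
        rw [hgp]
        by_cases hpA : p.1 ∈ A
        · have : p.1 ∉ F := fun hF => hp.2 ⟨hb, hF⟩
          rw [hFdef] at this
          by_contra hle
          exact this ⟨hpA, le_of_not_gt hle⟩
        · have : w p.1 = 0 := by rw [hwdef]; dsimp only; rw [dif_neg hpA]
          rw [this]; exact hε
      · rw [hgdef]; dsimp only; rw [if_neg (by rw [hb]; simp)]; exact hε
    · have hopen : IsOpen ({((x, true) : ADS X)} : Set (ADS X)) := by
        apply isOpen_true
        rintro p hp
        rw [Set.mem_singleton_iff] at hp
        rw [hp]
      rw [ContinuousAt, (isOpen_singleton_iff_nhds_eq_pure (X := ADS X) (x, true)).1 hopen]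
      exact tendsto_pure_nhds g _
  have hTcomp : IsCompact (Set.range (dup rs A)) := isCompact_range_dup hc hret hcomp hA
  haveI : CompactSpace ↥(Set.range (dup rs A)) := isCompact_iff_compactSpace.1 hTcomp
  have hmem' : ∀ p : ADS X, p ∈ Set.range (dup rs A) → p.1 ∈ Set.range rs := by
    intro p hp
    rw [range_dup hret hA] at hp
    rcases hp with h | h
    · exact h.1
    · exact hA h.1
  have htrueA : ∀ z : ADS X, z ∈ Set.range (dup rs A) → z.2 = true → z.1 ∈ A := by
    intro z hz hz2
    rw [range_dup hret hA] at hz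
    rcases hz with hl | hr
    · have hzf : z.2 = false := hl.2
      rw [hz2] at hzf
      exact absurd hzf (by simp)
    · exact hr.1
  have hmemT : ∀ p : ↥(Set.range (dup rs A)), (p : ADS X).1 ∈ Set.range rs :=
    fun p => hmem' p p.2
  set φ : ↥(Set.range (dup rs A)) → ↥(Set.range rs) × ℝ :=
    fun p => (⟨(p : ADS X).1, hmemT p⟩, g (p : ADS X)) with hφdef
  have hφc : Continuous φ := by
    apply Continuous.prodMk
    · exact Continuous.subtype_mk (continuous_fst'.comp continuous_subtype_val) _
    · exact hcg.comp continuous_subtype_val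
  have hφi : Function.Injective φ := by
    rintro ⟨p, hp⟩ ⟨q, hq⟩ h
    have h1 : p.1 = q.1 := congrArg (fun z => (z.1 : X)) h
    have h2 : g p = g q := congrArg Prod.snd h
    have h3 : p.2 = q.2 := by
      rcases Bool.eq_false_or_eq_true p.2 with hb | hb <;>
        rcases Bool.eq_false_or_eq_true q.2 with hb' | hb'
      · rw [hb, hb']
      · exfalso
        have hgp : g p = w p.1 := by rw [hgdef]; dsimp only; rw [if_pos hb]
        have hgq : g q = 0 := by rw [hgdef]; dsimp only; rw [if_neg (by rw [hb']; simp)]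
        have := hwpos p.1 (htrueA p hp hb)
        rw [hgp, hgq] at h2
        linarith
      · exfalso
        have hgq : g q = w q.1 := by rw [hgdef]; dsimp only; rw [if_pos hb']
        have hgp : g p = 0 := by rw [hgdef]; dsimp only; rw [if_neg (by rw [hb]; simp)]
        have := hwpos q.1 (htrueA q hq hb')
        rw [hgp, hgq] at h2
        linarith
      · rw [hb, hb']
    exact Subtype.ext (Prod.ext h1 h3)
  exact (hφc.isClosedEmbedding hφi).toIsEmbedding.metrizableSpace

end Metr

end ADS
namespace ADS

variable {X : Type u} [TopologicalSpace X]

lemma countablyCompact (hcc : CountablyCompact X) : CountablyCompact (ADS X) := by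
  classical
  intro U hU hUcov
  have hVo : ∀ n, IsOpen {x : X | ((x, false) : ADS X) ∈ U n} := by
    intro n
    rw [isOpen_iff_forall_mem_open]
    intro x hx
    obtain ⟨U', hU'o, hxU', hsub⟩ := isOpen_iff.1 (hU n) x hx
    exact ⟨U', fun y hy => hsub ⟨⟨hy, trivial⟩, by simp⟩, hU'o, hxU'⟩
  have hVcov : (⋃ n, {x : X | ((x, false) : ADS X) ∈ U n}) = Set.univ := by
    rw [Set.eq_univ_iff_forall]
    intro x
    obtain ⟨n, hn⟩ := Set.mem_iUnion.1
      (Set.eq_univ_iff_forall.1 hUcov ((x, false) : ADS X))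
    exact Set.mem_iUnion.2 ⟨n, hn⟩
  obtain ⟨t, ht⟩ := hcc _ hVo hVcov
  set W : Set (ADS X) := ⋃ n ∈ t, U n with hWdef
  have hWo : IsOpen W := isOpen_biUnion fun n _ => hU n
  have hWfalse : ∀ x : X, ((x, false) : ADS X) ∈ W := by
    intro x
    obtain ⟨n, hn, hxn⟩ := Set.mem_iUnion₂.1 (Set.eq_univ_iff_forall.1 ht x)
    exact Set.mem_iUnion₂.2 ⟨n, hn, hxn⟩
  set S : Set X := {x | ((x, true) : ADS X) ∉ W} with hSdef
  have hnb : ∀ x : X, ∃ U' : Set X, IsOpen U' ∧ x ∈ U' ∧ ∀ b ∈ U', b ∈ S → b = x := by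
    intro x
    obtain ⟨U', hU'o, hxU', hsub⟩ := exists_nice_nbhd hWo (hWfalse x)
    refine ⟨U', hU'o, hxU', fun b hb hbS => ?_⟩
    by_contra hne
    exact hbS (hsub b hb hne)
  have hclosed : ∀ C, C ⊆ S → IsClosed C := by
    intro C hCS
    rw [← closure_subset_iff_isClosed]
    intro x hx
    obtain ⟨U', hU'o, hxU', hU'⟩ := hnb x
    obtain ⟨b, hbU, hbC⟩ := mem_closure_iff.1 hx U' hU'o hxU'
    rwa [← hU' b hbU (hCS hbC)]
  have hSfin : S.Finite := by
    by_contra hinf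
    have e : ℕ ↪ ↥S := Set.Infinite.natEmbedding S hinf
    have hCS : ∀ k : ℕ, {x : X | ∃ j ≥ k, ((e j : X)) = x} ⊆ S := by
      rintro k x ⟨j, hj, rfl⟩
      exact (e j).2
    have hCcl : ∀ k, IsClosed {x : X | ∃ j ≥ k, ((e j : X)) = x} := fun k =>
      hclosed _ (hCS k)
    have hOcov : (⋃ k, {x : X | ∃ j ≥ k, ((e j : X)) = x}ᶜ) = Set.univ := by
      rw [Set.eq_univ_iff_forall]
      intro x
      rw [Set.mem_iUnion]
      by_cases hx : ∃ j, (e j : X) = x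
      · obtain ⟨j, hj⟩ := hx
        refine ⟨j + 1, ?_⟩
        rintro ⟨j', hj', hj'x⟩
        have hjj : j' = j := e.injective (Subtype.ext (hj'x.trans hj.symm))
        omega
      · exact ⟨0, fun ⟨j, _, hjx⟩ => hx ⟨j, hjx⟩⟩
    obtain ⟨t2, ht2⟩ := hcc _ (fun k => (hCcl k).isOpen_compl) hOcov
    have hmem := Set.eq_univ_iff_forall.1 ht2 ((e (t2.sup id) : X))
    obtain ⟨k, hk, hek⟩ := Set.mem_iUnion₂.1 hmem
    exact hek ⟨t2.sup id, Finset.le_sup (f := id) hk, rfl⟩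
  have hFfin : ({p : ADS X | p.1 ∈ S ∧ p.2 = true}).Finite := by
    apply Set.Finite.subset (hSfin.image (fun a => ((a, true) : ADS X)))
    rintro ⟨y, b⟩ ⟨hy, hb⟩
    have hb' : b = true := hb
    subst hb'
    exact ⟨y, hy, rfl⟩
  obtain ⟨t3, ht3⟩ := hFfin.isCompact.elim_finite_subcover U hU
    (by rw [hUcov]; exact Set.subset_univ _)
  refine ⟨t ∪ t3, ?_⟩
  rw [Set.eq_univ_iff_forall]
  rintro ⟨x, b⟩
  cases b
  · obtain ⟨n, hn, hxn⟩ := Set.mem_iUnion₂.1 (hWfalse x)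
    exact Set.mem_iUnion₂.2 ⟨n, Finset.mem_union_left _ hn, hxn⟩
  · by_cases hxW : ((x, true) : ADS X) ∈ W
    · obtain ⟨n, hn, hxn⟩ := Set.mem_iUnion₂.1 hxW
      exact Set.mem_iUnion₂.2 ⟨n, Finset.mem_union_left _ hn, hxn⟩
    · obtain ⟨n, hn, hxn⟩ := Set.mem_iUnion₂.1 (ht3 (show ((x, true) : ADS X) ∈ {p : ADS X | p.1 ∈ S ∧ p.2 = true} from ⟨hxW, rfl⟩))
      exact Set.mem_iUnion₂.2 ⟨n, Finset.mem_union_right _ hn, hxn⟩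

end ADS
/-- The Aleksandrov duplicate of a non-commutative Corson countably
compact space is a non-commutative Corson countably compact space. -/
theorem aleksandrovDuplicate_of_ncCorson
    {X : Type u} [TopologicalSpace X] [T2Space X] [CompletelyRegularSpace X]
    (hX : IsNCCorson X) :
    @IsNCCorson (X × Bool) (ADTopology X) := by
  suffices h : IsNCCorson (ADS X) from h
  obtain ⟨hcc, Γ, instΓ, r, hskel, hfull⟩ := hX
  haveI : IsDirected Γ (· ≤ ·) := ⟨hskel.directed⟩
  haveI : Nonempty Γ := hskel.nonempty
  have hfix : ∀ s : Γ, ∀ a ∈ Set.range (r s), r s a = a := fun s a ha =>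
    ADS.fix_of_mem_range (hskel.retraction s) ha
  have hrange_mono : ∀ s t : Γ, s ≤ t → Set.range (r s) ⊆ Set.range (r t) := by
    intro s t hst a ha
    have h3 : r t (r s a) = r s a := ADS.comp_app_eq (hskel.comp_eq_of_le s t hst).1 a
    rw [hfix s a ha] at h3
    exact ⟨a, h3⟩
  refine ⟨ADS.countablyCompact hcc, ?_⟩
  refine ⟨{p : Γ × Set X // p.2.Countable ∧ p.2 ⊆ Set.range (r p.1)}, inferInstance,
    fun p => ADS.dup (r p.1.1) p.1.2, ?_, ?_⟩
  · have hdir : ∀ p q : {p : Γ × Set X // p.2.Countable ∧ p.2 ⊆ Set.range (r p.1)},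
        ∃ w, p ≤ w ∧ q ≤ w := by
      rintro ⟨⟨s, A⟩, hA⟩ ⟨⟨t, B⟩, hB⟩
      obtain ⟨w, hsw, htw⟩ := hskel.directed s t
      refine ⟨⟨(w, A ∪ B), hA.1.union hB.1,
        Set.union_subset (hA.2.trans (hrange_mono s w hsw)) (hB.2.trans (hrange_mono t w htw))⟩,
        ?_, ?_⟩
      · exact Subtype.mk_le_mk.2 (Prod.mk_le_mk.2 ⟨hsw, Set.subset_union_left⟩)
      · exact Subtype.mk_le_mk.2 (Prod.mk_le_mk.2 ⟨htw, Set.subset_union_right⟩)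
    haveI hne' : Nonempty {p : Γ × Set X // p.2.Countable ∧ p.2 ⊆ Set.range (r p.1)} := by
      obtain ⟨s0⟩ := hskel.nonempty
      exact ⟨⟨(s0, ∅), Set.countable_empty, Set.empty_subset _⟩⟩
    haveI : IsDirected {p : Γ × Set X // p.2.Countable ∧ p.2 ⊆ Set.range (r p.1)} (· ≤ ·) :=
      ⟨hdir⟩
    constructor
    · exact hne'
    · exact hdir
    · rintro ⟨⟨s, A⟩, hA⟩
      exact ADS.continuous_dup (hskel.continuous s) (fun a ha => hfix s a (hA.2 ha))
    · rintro ⟨⟨s, A⟩, hA⟩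
      exact ADS.dup_idem (hskel.retraction s) A
    · rintro ⟨⟨s, A⟩, hA⟩
      exact ADS.isCompact_range_dup (hskel.continuous s) (hskel.retraction s)
        (hskel.compact_range s) hA.2
    · rintro ⟨⟨s, A⟩, hA⟩
      exact ADS.metrizable_range_dup (hskel.continuous s) (hskel.retraction s)
        (hskel.compact_range s) hA.2 hA.1 (hskel.metrizable_range s)
    · rintro ⟨⟨s, A⟩, hA⟩ ⟨⟨t, B⟩, hB⟩ hle
      have hle' : s ≤ t ∧ A ⊆ B := Prod.mk_le_mk.1 (Subtype.mk_le_mk.1 hle)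
      obtain ⟨h1, h2⟩ := hskel.comp_eq_of_le s t hle'.1
      exact ADS.dup_comp_le h1 h2 hle'.2
    · intro u hu
      have hs : Monotone (fun n => (u n).1.1) := fun m n h =>
        (Prod.le_def.1 (Subtype.coe_le_coe.mpr (hu h))).1
      have hAmono : ∀ m n, m ≤ n → (u m).1.2 ⊆ (u n).1.2 := fun m n h =>
        (Prod.le_def.1 (Subtype.coe_le_coe.mpr (hu h))).2
      obtain ⟨t, hlub, htend⟩ := hskel.seq_sup (fun n => (u n).1.1) hs
      have hst : ∀ n, (u n).1.1 ≤ t := fun n => hlub.1 (Set.mem_range_self n)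
      have hsubT : (⋃ n, (u n).1.2) ⊆ Set.range (r t) :=
        Set.iUnion_subset fun n => ((u n).2.2).trans (hrange_mono _ _ (hst n))
      refine ⟨⟨(t, ⋃ n, (u n).1.2), Set.countable_iUnion (fun n => (u n).2.1), hsubT⟩, ?_, ?_⟩
      · constructor
        · rintro z ⟨n, rfl⟩
          exact Subtype.coe_le_coe.1 (Prod.le_def.2 ⟨hst n, Set.subset_iUnion (fun k => (u k).1.2) n⟩)
        · rintro z hz
          refine Subtype.coe_le_coe.1 (Prod.le_def.2 ⟨?_, ?_⟩)
          · refine hlub.2 ?_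
            rintro y ⟨n, rfl⟩
            exact (Prod.le_def.1 (Subtype.coe_le_coe.2 (hz (Set.mem_range_self n)))).1
          · exact Set.iUnion_subset fun n =>
              (Prod.le_def.1 (Subtype.coe_le_coe.2 (hz (Set.mem_range_self n)))).2
      · rintro ⟨x, b⟩
        cases b
        · have hfeq : (fun n => ADS.dup (r ((u n).1.1)) ((u n).1.2) (x, false))
              = fun n => ((r ((u n).1.1) x, false) : ADS X) :=
            funext fun n => ADS.dup_false _ _ _
          rw [hfeq, ADS.dup_false]
          exact ADS.tendsto_false (htend x) (Filter.Eventually.of_forall fun n => ADS.ne_true_of_false)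
        · by_cases hx : x ∈ ⋃ n, (u n).1.2
          · obtain ⟨N, hN⟩ := Set.mem_iUnion.1 hx
            rw [ADS.dup_true_mem hx]
            exact ADS.tendsto_of_eventually_eq (Filter.eventually_atTop.2
              ⟨N, fun n hn => ADS.dup_true_mem (hAmono N n hn hN)⟩)
          · have hxn : ∀ n, x ∉ (u n).1.2 := fun n h => hx (Set.mem_iUnion.2 ⟨n, h⟩)
            have hfeq : (fun n => ADS.dup (r ((u n).1.1)) ((u n).1.2) (x, true))
                = fun n => ((r ((u n).1.1) x, false) : ADS X) :=
              funext fun n => ADS.dup_true_not_mem (hxn n)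
            rw [hfeq, ADS.dup_true_not_mem hx]
            exact ADS.tendsto_false (htend x) (Filter.Eventually.of_forall fun n => ADS.ne_true_of_false)
    · rintro ⟨x, b⟩
      cases b
      · have hfeq : (fun p : {p : Γ × Set X // p.2.Countable ∧ p.2 ⊆ Set.range (r p.1)} =>
              ADS.dup (r p.1.1) p.1.2 (x, false))
            = fun p => ((r p.1.1 x, false) : ADS X) := funext fun p => ADS.dup_false _ _ _
        rw [hfeq]
        refine ADS.tendsto_false ?_ (Filter.Eventually.of_forall fun p => ADS.ne_true_of_false)
        rw [tendsto_nhds]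
        intro U hUo hxU
        obtain ⟨s0, hs0⟩ := Filter.eventually_atTop.1
          (tendsto_nhds.1 (hskel.tendsto_id x) U hUo hxU)
        refine Filter.mem_atTop_sets.2 ⟨⟨(s0, ∅), Set.countable_empty, Set.empty_subset _⟩, ?_⟩
        intro p hp
        exact hs0 p.1.1 (Prod.le_def.1 (Subtype.coe_le_coe.2 hp)).1
      · obtain ⟨s0, hs0⟩ := hfull x
        refine ADS.tendsto_of_eventually_eq (Filter.eventually_atTop.2
          ⟨⟨(s0, {x}), Set.countable_singleton x, by rwa [Set.singleton_subset_iff]⟩, ?_⟩)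
        intro p hp
        exact ADS.dup_true_mem ((Prod.le_def.1 (Subtype.coe_le_coe.2 hp)).2 rfl)
  · rintro ⟨x, b⟩
    obtain ⟨s0, hs0⟩ := hfull x
    cases b
    · refine ⟨⟨(s0, ∅), Set.countable_empty, Set.empty_subset _⟩, (x, false), ?_⟩
      show ADS.dup (r s0) ∅ (x, false) = (x, false)
      rw [ADS.dup_false, hfix s0 x hs0]
    · exact ⟨⟨(s0, {x}), Set.countable_singleton x, by rwa [Set.singleton_subset_iff]⟩,
        (x, true), ADS.dup_true_mem rfl⟩
end

section
/- Let K be a compact (Hausdorff) space. Then K is weakly non-commutative Valdivia if and only if there exist a compact space L admitting a retractional skeleton and a continuous surjection from L onto K. -/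
open Filter Topology Set

universe u

section Helpers

open TopologicalSpace

lemma aux_metrizable {A B : Type*} [TopologicalSpace A] [TopologicalSpace B]
    [CompactSpace A] [T2Space B] [MetrizableSpace B]
    {e : A → B} (hc : Continuous e) (hi : Function.Injective e) : MetrizableSpace A :=
  (hc.isClosedEmbedding hi).toIsEmbedding.metrizableSpace

lemma aux_clusterClosed {A : Type*} [TopologicalSpace A] {x : ℕ → A} {a : A}
    (h : ClusterPt a (Filter.map x atTop))
    {C : Set A} (hC : IsClosed C) {m : ℕ} (hx : ∀ n, m ≤ n → x n ∈ C) : a ∈ C := by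
  have h1 : x '' Set.Ici m ∈ Filter.map x atTop := image_mem_map (Ici_mem_atTop m)
  have ha : a ∈ closure (x '' Set.Ici m) :=
    mem_closure_iff_clusterPt.2 (h.mono (le_principal_iff.2 h1))
  exact closure_minimal (by rintro _ ⟨n, hn, rfl⟩; exact hx n hn) hC ha

lemma aux_cr_subtype {A : Type*} [TopologicalSpace A] [CompletelyRegularSpace A]
    (S : Set A) : CompletelyRegularSpace ↥S := by
  constructor
  intro x Kc hK hx
  obtain ⟨C, hC, rfl⟩ := isClosed_induced_iff.1 hK
  obtain ⟨f, hf, hfx, hfC⟩ := CompletelyRegularSpace.completely_regular (x : A) C hC hx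
  exact ⟨f ∘ Subtype.val, hf.comp continuous_subtype_val, hfx, fun k hk => hfC hk⟩

lemma aux_cc_image {A B : Type u} [TopologicalSpace A] [TopologicalSpace B]
    (hA : CountablyCompact A) {f : A → B} (hf : Continuous f) (hs : Function.Surjective f) :
    CountablyCompact B := by
  intro U hU hUniv
  obtain ⟨t, ht⟩ := hA (fun n => f ⁻¹' U n) (fun n => (hU n).preimage hf)
    (by rw [← Set.preimage_iUnion, hUniv, Set.preimage_univ])
  refine ⟨t, Set.eq_univ_iff_forall.2 fun b => ?_⟩
  obtain ⟨a, rfl⟩ := hs b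
  have ha : a ∈ ⋃ n ∈ t, f ⁻¹' U n := ht ▸ Set.mem_univ a
  simp only [Set.mem_iUnion] at ha ⊢
  obtain ⟨n, hn, han⟩ := ha
  exact ⟨n, hn, han⟩

end Helpers


/-- A compact space is weakly non-commutative Valdivia iff it is a
continuous image of a compact space admitting a retractional skeleton. -/
theorem weaklyNCValdivia_iff_image_of_ncValdivia
    {K : Type u} [TopologicalSpace K] [CompactSpace K] [T2Space K] :
    IsWeaklyNCValdivia K ↔
      ∃ (L : Type u) (_ : TopologicalSpace L) (_ : CompactSpace L) (_ : T2Space L),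
        HasRetractionalSkeleton L ∧ ∃ f : L → K, Continuous f ∧ Function.Surjective f := by
  constructor
  · -- forward direction
    rintro ⟨hKv, D, hD, hDcc, X, tX, t2X, crX, ⟨ccX, Γ, pO, r, skel, full⟩, f, hf, hfs⟩
    classical
    letI := tX
    haveI := t2X
    letI := pO
    haveI : Nonempty Γ := skel.nonempty
    haveI : IsDirected Γ (· ≤ ·) := ⟨skel.directed⟩
    have hfix : ∀ (s : Γ) (z : X), z ∈ Set.range (r s) → r s z = z := by
      rintro s _ ⟨w, rfl⟩; exact congrFun (skel.retraction s) w
    have hfix' : ∀ s t : Γ, s ≤ t → ∀ z ∈ Set.range (r s), r t z = z := by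
      rintro s t hst _ ⟨w, rfl⟩; exact congrFun (skel.comp_eq_of_le s t hst).1 w
    set fK : X → K := fun x => (f x : K) with hfKdef
    have hfKc : Continuous fK := continuous_subtype_val.comp hf
    set φ : X → (Γ → X) × K := fun x => (fun s => r s x, fK x) with hφdef
    have hφc : Continuous φ :=
      Continuous.prodMk (continuous_pi fun s => skel.continuous s) hfKc
    set M : Set ((Γ → X) × K) := closure (Set.range φ) with hMdef
    have hMc : IsCompact M := by
      have hT : IsCompact ((Set.pi Set.univ fun s => Set.range (r s)) ×ˢ (Set.univ : Set K)) :=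
        (isCompact_univ_pi fun s => skel.compact_range s).prod isCompact_univ
      exact hT.of_isClosed_subset isClosed_closure
        (closure_minimal
          (by rintro _ ⟨x, rfl⟩; exact ⟨fun s _ => Set.mem_range_self x, Set.mem_univ _⟩)
          hT.isClosed)
    haveI hMcs : CompactSpace ↥M := isCompact_iff_compactSpace.1 hMc
    have hMa : ∀ p ∈ M, ∀ s : Γ, p.1 s ∈ Set.range (r s) := by
      intro p hp s
      refine closure_minimal ?_ (IsClosed.preimage ((continuous_apply s).comp continuous_fst)
        (skel.compact_range s).isClosed) hp
      rintro _ ⟨x, rfl⟩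
      exact Set.mem_range_self x
    have hMb : ∀ p ∈ M, ∀ s t : Γ, s ≤ t → r s (p.1 t) = p.1 s := by
      intro p hp s t hst
      refine closure_minimal ?_ (isClosed_eq
        ((skel.continuous s).comp ((continuous_apply t).comp continuous_fst))
        ((continuous_apply s).comp continuous_fst)) hp
      rintro _ ⟨x, rfl⟩
      exact congrFun (skel.comp_eq_of_le s t hst).2 x
    set ψ : X → ↥M := fun x => ⟨φ x, subset_closure (Set.mem_range_self x)⟩ with hψdef
    have hψc : Continuous ψ := hφc.subtype_mk _
    set R : Γ → ↥M → ↥M := fun s q => ψ (q.1.1 s) with hRdef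
    have hRc : ∀ s, Continuous (R s) := fun s =>
      hψc.comp ((continuous_apply s).comp (continuous_fst.comp continuous_subtype_val))
    have hret : ∀ s, R s ∘ R s = R s := by
      intro s; funext q
      show ψ ((φ (q.1.1 s)).1 s) = ψ (q.1.1 s)
      rw [show (φ (q.1.1 s)).1 s = r s (q.1.1 s) from rfl, hfix s _ (hMa q.1 q.2 s)]
    have hcomp : ∀ s t, s ≤ t → R t ∘ R s = R s ∧ R s ∘ R t = R s := by
      intro s t hst
      constructor
      · funext q
        show ψ ((φ (q.1.1 s)).1 t) = ψ (q.1.1 s)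
        rw [show (φ (q.1.1 s)).1 t = r t (q.1.1 s) from rfl, hfix' s t hst _ (hMa q.1 q.2 s)]
      · funext q
        show ψ ((φ (q.1.1 t)).1 s) = ψ (q.1.1 s)
        rw [show (φ (q.1.1 t)).1 s = r s (q.1.1 t) from rfl, hMb q.1 q.2 s t hst]
    have hmetr : ∀ s, TopologicalSpace.MetrizableSpace ↥(Set.range (R s)) := by
      intro s
      haveI : CompactSpace ↥(Set.range (R s)) :=
        isCompact_iff_compactSpace.1 (isCompact_range (hRc s))
      haveI : TopologicalSpace.MetrizableSpace ↥(Set.range (r s)) := skel.metrizable_range s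
      have hkey : ∀ q : ↥(Set.range (R s)), q.1.1.1 s ∈ Set.range (r s) :=
        fun q => hMa q.1.1 q.1.2 s
      have hrec : ∀ q : ↥M, q ∈ Set.range (R s) → q.1 = φ (q.1.1 s) := by
        rintro _ ⟨p, rfl⟩
        show (ψ (p.1.1 s)).1 = φ ((ψ (p.1.1 s)).1.1 s)
        rw [show (ψ (p.1.1 s)).1 = φ (p.1.1 s) from rfl,
          show (φ (p.1.1 s)).1 s = r s (p.1.1 s) from rfl, hfix s _ (hMa p.1 p.2 s)]
      refine aux_metrizable
        (e := fun q : ↥(Set.range (R s)) => (⟨q.1.1.1 s, hkey q⟩ : ↥(Set.range (r s)))) ?_ ?_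
      · exact ((continuous_apply s).comp (continuous_fst.comp
          (continuous_subtype_val.comp continuous_subtype_val))).subtype_mk _
      · intro q1 q2 hq
        have hq' : (⟨q1.1.1.1 s, hkey q1⟩ : ↥(Set.range (r s))) = ⟨q2.1.1.1 s, hkey q2⟩ := hq
        have h12 := congrArg (Subtype.val : ↥(Set.range (r s)) → X) hq'
        refine Subtype.ext (Subtype.ext ?_)
        rw [hrec q1.1 q1.2, hrec q2.1 q2.2]
        exact congrArg φ h12
    have hseq : ∀ u : ℕ → Γ, Monotone u → ∃ t, IsLUB (Set.range u) t ∧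
        ∀ q : ↥M, Filter.Tendsto (fun n => R (u n) q) Filter.atTop (nhds (R t q)) := by
      intro u hu
      obtain ⟨t, hlub, htend⟩ := skel.seq_sup u hu
      refine ⟨t, hlub, fun q => ?_⟩
      have h3 := htend (q.1.1 t)
      rw [hfix t _ (hMa q.1 q.2 t)] at h3
      have h2 : Filter.Tendsto (fun n => q.1.1 (u n)) Filter.atTop (nhds (q.1.1 t)) :=
        h3.congr fun n => hMb q.1 q.2 (u n) t (hlub.1 (Set.mem_range_self n))
      exact (hψc.tendsto (q.1.1 t)).comp h2
    -- the limit condition: the key argument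
    have hid : ∀ q : ↥M, Filter.Tendsto (fun s => R s q) Filter.atTop (nhds q) := by
      intro q
      rw [tendsto_subtype_rng]
      have hP : (q.1 : (Γ → X) × K) = (q.1.1, q.1.2) := rfl
      rw [hP]
      show Filter.Tendsto
        (fun s => ((fun v => r v (q.1.1 s), fK (q.1.1 s)) : (Γ → X) × K))
        Filter.atTop (nhds (q.1.1, q.1.2))
      refine Filter.Tendsto.prodMk_nhds ?_ ?_
      · rw [tendsto_pi_nhds]
        intro v
        refine Filter.Tendsto.congr' ?_ tendsto_const_nhds
        filter_upwards [Filter.eventually_ge_atTop v] with s hs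
        exact (hMb q.1 q.2 v s hs).symm
      · -- (*) the second component
        haveI : Nonempty X := ⟨q.1.1 (Classical.arbitrary Γ)⟩
        rw [tendsto_nhds]
        intro U hU hkU
        by_contra hnot
        have hnot' : ¬ ∀ᶠ s in Filter.atTop, fK (q.1.1 s) ∈ U := hnot
        have hF : ∀ a : Γ, ∃ b ≥ a, fK (q.1.1 b) ∉ U :=
          Filter.frequently_atTop.1 (Filter.not_eventually.1 hnot')
        obtain ⟨g, hg0, hg1, hg01⟩ := exists_continuous_zero_one_of_isClosed
          (isClosed_singleton (x := q.1.2)) hU.isClosed_compl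
          (by rw [Set.disjoint_singleton_left]; simpa using hkU)
        choose σf hσf using full
        have hstep : ∀ Q : Finset (Γ × X),
            (∀ p ∈ Q, fK (q.1.1 p.1) ∉ U ∧ g (fK p.2) < 1/4 ∧ (3:ℝ)/4 < g (fK (r p.1 p.2))) →
            ∃ p' : Γ × X, (fK (q.1.1 p'.1) ∉ U ∧ g (fK p'.2) < 1/4 ∧
                (3:ℝ)/4 < g (fK (r p'.1 p'.2))) ∧
              ∀ p ∈ Q, p.1 ≤ p'.1 ∧ (3:ℝ)/4 < g (fK (r p.1 p'.2)) ∧ r p'.1 p.2 = p.2 := by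
          intro Q hQ
          obtain ⟨b, hb⟩ := (Q.image Prod.fst ∪ Q.image fun p => σf p.2).exists_le
          obtain ⟨s', hs'b, hs'F⟩ := hF b
          have hO1 : IsOpen {p : (Γ → X) × K | g p.2 < 1/4} :=
            isOpen_lt (g.continuous.comp continuous_snd) continuous_const
          have hO2 : ∀ s0 : Γ, IsOpen {p : (Γ → X) × K | (3:ℝ)/4 < g (fK (p.1 s0))} := fun s0 =>
            isOpen_lt continuous_const
              (g.continuous.comp (hfKc.comp ((continuous_apply s0).comp continuous_fst)))
          set O : Set ((Γ → X) × K) := {p | g p.2 < 1/4} ∩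
            ({p | (3:ℝ)/4 < g (fK (p.1 s'))} ∩
              ⋂ pq ∈ Q, {p : (Γ → X) × K | (3:ℝ)/4 < g (fK (p.1 pq.1))}) with hOdef
          have hOopen : IsOpen O :=
            hO1.inter ((hO2 s').inter (isOpen_biInter_finset fun pq _ => hO2 pq.1))
          have hqO : (q.1 : (Γ → X) × K) ∈ O := by
            refine ⟨?_, ?_, ?_⟩
            · have h0 : g q.1.2 = 0 := hg0 rfl
              show g q.1.2 < 1/4
              rw [h0]; norm_num
            · have h1 : g (fK (q.1.1 s')) = 1 := hg1 hs'F
              show (3:ℝ)/4 < g (fK (q.1.1 s'))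
              rw [h1]; norm_num
            · refine Set.mem_iInter₂.2 fun pq hpq => ?_
              have h1 : g (fK (q.1.1 pq.1)) = 1 := hg1 (hQ pq hpq).1
              show (3:ℝ)/4 < g (fK (q.1.1 pq.1))
              rw [h1]; norm_num
          obtain ⟨w, hwO, hwr⟩ := mem_closure_iff.1 q.2 O hOopen hqO
          obtain ⟨x', rfl⟩ := hwr
          refine ⟨(s', x'), ⟨hs'F, hwO.1, hwO.2.1⟩, ?_⟩
          intro p hp
          refine ⟨le_trans (hb p.1 (Finset.mem_union_left _
              (Finset.mem_image_of_mem _ hp))) hs'b, ?_, ?_⟩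
          · exact Set.mem_iInter₂.1 hwO.2.2 p hp
          · exact hfix' (σf p.2) s' (le_trans (hb _ (Finset.mem_union_right _
              (Finset.mem_image_of_mem _ hp))) hs'b) p.2 (hσf p.2)
        obtain ⟨c, hcP, hcR⟩ := exists_seq_of_forall_finset_exists
          (fun p : Γ × X => fK (q.1.1 p.1) ∉ U ∧ g (fK p.2) < 1/4 ∧ (3:ℝ)/4 < g (fK (r p.1 p.2)))
          (fun p p' => p.1 ≤ p'.1 ∧ (3:ℝ)/4 < g (fK (r p.1 p'.2)) ∧ r p'.1 p.2 = p.2) hstep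
        have hsmono : Monotone fun n => (c n).1 := by
            intro m n hmn
            rcases lt_or_eq_of_le hmn with hlt | heq
            · exact (hcR m n hlt).1
            · rw [heq]
        obtain ⟨T, hTlub, hTtend⟩ := skel.seq_sup (fun n => (c n).1) hsmono
        have hxfix : ∀ m, r T (c m).2 = (c m).2 := by
          intro m
          refine tendsto_nhds_unique (hTtend (c m).2) (tendsto_const_nhds.congr' ?_)
          filter_upwards [Filter.eventually_gt_atTop m] with n hn
          exact ((hcR m n hn).2.2).symm
        haveI : (Filter.map (fun n => (c n).2) Filter.atTop).NeBot :=
          Filter.map_neBot (m := fun n => (c n).2)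
        obtain ⟨xs, hxsmem, hxscl⟩ := (skel.compact_range T).exists_clusterPt
          (f := Filter.map (fun n => (c n).2) Filter.atTop)
          (Filter.le_principal_iff.2 (Filter.mem_map.2
            (Filter.univ_mem' fun n => ⟨(c n).2, hxfix n⟩)))
        have h1 : g (fK xs) ≤ 1/4 := by
          refine aux_clusterClosed hxscl
            (isClosed_le (g.continuous.comp hfKc) continuous_const) (m := 0) ?_
          intro n _
          exact le_of_lt (hcP n).2.1
        have h2 : ∀ m, (3:ℝ)/4 ≤ g (fK (r (c m).1 xs)) := by
          intro m
          refine aux_clusterClosed hxscl (isClosed_le continuous_const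
            (g.continuous.comp (hfKc.comp (skel.continuous (c m).1)))) (m := m) ?_
          intro n hn
          rcases lt_or_eq_of_le hn with hlt | heq
          · exact le_of_lt (hcR m n hlt).2.1
          · rw [← heq]
            exact le_of_lt (hcP m).2.2
        have h3 : Filter.Tendsto (fun m => g (fK (r (c m).1 xs))) Filter.atTop
            (nhds (g (fK xs))) := by
          have h4 := hTtend xs
          rw [hfix T xs hxsmem] at h4
          exact ((g.continuous.comp hfKc).tendsto xs).comp h4
        have h5 : (3:ℝ)/4 ≤ g (fK xs) := ge_of_tendsto h3 (Filter.Eventually.of_forall h2)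
        linarith
    refine ⟨↥M, inferInstance, hMcs, inferInstance,
      ⟨Γ, pO, R, ⟨skel.nonempty, skel.directed, hRc, hret,
        fun s => isCompact_range (hRc s), hmetr, hcomp, hseq, hid⟩⟩,
      (fun q : ↥M => q.1.2), continuous_snd.comp continuous_subtype_val, ?_⟩
    have hF2c : Continuous (fun q : ↥M => q.1.2) := continuous_snd.comp continuous_subtype_val
    have hDsub : D ⊆ Set.range (fun q : ↥M => q.1.2) := by
      intro d hd
      obtain ⟨x, hx⟩ := hfs ⟨d, hd⟩
      refine ⟨ψ x, ?_⟩
      show (f x : K) = d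
      rw [hx]
    intro k
    have hk : k ∈ closure D := by rw [hD.closure_eq]; trivial
    exact closure_minimal hDsub (isCompact_range hF2c).isClosed hk
  · rintro ⟨L, tL, cL, t2L, ⟨Γ, pO, r, skel⟩, h, hc, hs⟩
    classical
    letI := tL
    haveI := cL
    haveI := t2L
    letI := pO
    haveI : Nonempty Γ := skel.nonempty
    haveI : IsDirected Γ (· ≤ ·) := ⟨skel.directed⟩
    have hfix : ∀ (s : Γ) (z : L), z ∈ Set.range (r s) → r s z = z := by
      rintro s _ ⟨w, rfl⟩; exact congrFun (skel.retraction s) w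
    have hfix' : ∀ s t : Γ, s ≤ t → ∀ z ∈ Set.range (r s), r t z = z := by
      rintro s t hst _ ⟨w, rfl⟩; exact congrFun (skel.comp_eq_of_le s t hst).1 w
    set Sg : Set L := ⋃ s, Set.range (r s) with hSgdef
    have hmemSg : ∀ (s : Γ) (z : L), r s z ∈ Sg := fun s z =>
      Set.mem_iUnion.2 ⟨s, Set.mem_range_self z⟩
    have hdense : Dense Sg := fun z =>
      mem_closure_of_tendsto (skel.tendsto_id z)
        (Filter.Eventually.of_forall fun s => hmemSg s z)
    -- countable compactness of the union of ranges
    have hccSg : CountablyCompact ↥Sg := by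
      intro U hU hUcov
      by_contra hfin
      push_neg at hfin
      have hpick : ∀ n : ℕ, ∃ ζ : ↥Sg, ζ ∉ ⋃ k ∈ Finset.range (n + 1), U k := fun n =>
        (Set.ne_univ_iff_exists_notMem _).1 (hfin (Finset.range (n + 1)))
      choose ζ hζ using hpick
      set z : ℕ → L := fun n => (ζ n).1 with hzdef
      choose σ hσ using fun n => Set.mem_iUnion.1 (ζ n).2
      let t : ℕ → Γ := fun n => Nat.rec (σ 0)
        (fun m tm => Classical.choose (skel.directed tm (σ (m + 1)))) n
      have ht1 : ∀ m, t m ≤ t (m + 1) := fun m =>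
        (Classical.choose_spec (skel.directed (t m) (σ (m + 1)))).1
      have ht2 : ∀ m, σ m ≤ t m := by
        intro m
        cases m with
        | zero => exact le_refl _
        | succ m => exact (Classical.choose_spec (skel.directed (t m) (σ (m + 1)))).2
      have htm : Monotone t := monotone_nat_of_le_succ ht1
      obtain ⟨T, hTlub, hTtend⟩ := skel.seq_sup t htm
      have hzfix : ∀ n, r T (z n) = z n := by
        intro n
        refine tendsto_nhds_unique (hTtend (z n)) (tendsto_const_nhds.congr' ?_)
        filter_upwards [Filter.eventually_ge_atTop n] with m hm
        exact (hfix' (σ n) (t m) (le_trans (ht2 n) (htm hm)) _ (hσ n)).symm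
      haveI : (Filter.map z Filter.atTop).NeBot := Filter.map_neBot (m := z) (f := Filter.atTop)
      obtain ⟨zs, hzsmem, hzscl⟩ := (skel.compact_range T).exists_clusterPt (f := Filter.map z Filter.atTop)
        (Filter.le_principal_iff.2 (Filter.mem_map.2 (Filter.univ_mem' fun n => ⟨z n, hzfix n⟩)))
      have hzsSg : zs ∈ Sg := Set.mem_iUnion.2 ⟨T, hzsmem⟩
      have hmem : (⟨zs, hzsSg⟩ : ↥Sg) ∈ ⋃ n, U n := by rw [hUcov]; trivial
      obtain ⟨m, hm⟩ := Set.mem_iUnion.1 hmem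
      obtain ⟨V, hV, hVe⟩ := isOpen_induced_iff.1 (hU m)
      have hzsV : zs ∈ V := by
        have h2 : (⟨zs, hzsSg⟩ : ↥Sg) ∈ Subtype.val ⁻¹' V := by rw [hVe]; exact hm
        exact h2
      have hznV : ∀ n, m ≤ n → z n ∈ Vᶜ := by
        intro n hn hzn
        refine hζ n (Set.mem_biUnion (Finset.mem_range.2 (Nat.lt_succ_of_le hn)) ?_)
        have h3 : ζ n ∈ Subtype.val ⁻¹' V := hzn
        rw [hVe] at h3
        exact h3
      exact (aux_clusterClosed hzscl hV.isClosed_compl hznV) hzsV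
    -- the induced retractional skeleton on Sg
    let R : Γ → ↥Sg → ↥Sg := fun s z => ⟨r s z.1, hmemSg s z.1⟩
    have hRc : ∀ s, Continuous (R s) :=
      fun s => ((skel.continuous s).comp continuous_subtype_val).subtype_mk _
    have hRfixval : ∀ (s : Γ) (z : ↥Sg), z.1 ∈ Set.range (r s) → R s z = z :=
      fun s z hz => Subtype.ext (hfix s z.1 hz)
    have hRrange : ∀ s, Set.range (R s) = Subtype.val ⁻¹' Set.range (r s) := by
      intro s
      ext z
      constructor
      · rintro ⟨p, rfl⟩; exact Set.mem_range_self _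
      · intro hz; exact ⟨z, hRfixval s z hz⟩
    have hRrangeC : ∀ s, IsCompact (Set.range (R s)) := by
      intro s
      have hsub : Set.range (r s) ∩ Sg = Set.range (r s) :=
        Set.inter_eq_left.2 fun z hz => Set.mem_iUnion.2 ⟨s, hz⟩
      rw [Topology.IsEmbedding.subtypeVal.isCompact_iff, hRrange s,
        Set.image_preimage_eq_inter_range, Subtype.range_coe, hsub]
      exact skel.compact_range s
    have hRmetr : ∀ s, TopologicalSpace.MetrizableSpace ↥(Set.range (R s)) := by
      intro s
      haveI : CompactSpace ↥(Set.range (R s)) := isCompact_iff_compactSpace.1 (hRrangeC s)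
      haveI : TopologicalSpace.MetrizableSpace ↥(Set.range (r s)) := skel.metrizable_range s
      have hmemr : ∀ q : ↥(Set.range (R s)), (q.1.1 : L) ∈ Set.range (r s) := by
        rintro ⟨q, p, rfl⟩
        exact Set.mem_range_self _
      refine aux_metrizable
        (e := fun q : ↥(Set.range (R s)) => (⟨q.1.1, hmemr q⟩ : ↥(Set.range (r s)))) ?_ ?_
      · exact (continuous_subtype_val.comp continuous_subtype_val).subtype_mk _
      · intro q1 q2 hq
        have hq' : (⟨q1.1.1, hmemr q1⟩ : ↥(Set.range (r s))) = ⟨q2.1.1, hmemr q2⟩ := hq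
        have h12 := congrArg (Subtype.val : ↥(Set.range (r s)) → L) hq'
        exact Subtype.ext (Subtype.ext h12)
    have hskel : IsRetractionalSkeleton (X := ↥Sg) R := by
      refine ⟨skel.nonempty, skel.directed, hRc, ?_, hRrangeC, hRmetr, ?_, ?_, ?_⟩
      · intro s; funext q
        exact Subtype.ext (congrFun (skel.retraction s) q.1)
      · intro s t hst
        constructor
        · funext q; exact Subtype.ext (congrFun (skel.comp_eq_of_le s t hst).1 q.1)
        · funext q; exact Subtype.ext (congrFun (skel.comp_eq_of_le s t hst).2 q.1)
      · intro u hu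
        obtain ⟨t, hlub, htend⟩ := skel.seq_sup u hu
        refine ⟨t, hlub, fun q => ?_⟩
        rw [tendsto_subtype_rng]
        exact htend q.1
      · intro q
        rw [tendsto_subtype_rng]
        exact skel.tendsto_id q.1
    have hfull : ∀ q : ↥Sg, ∃ s, q ∈ Set.range (R s) := by
      intro q
      obtain ⟨s, hz⟩ := Set.mem_iUnion.1 q.2
      exact ⟨s, by rw [hRrange s]; exact hz⟩
    -- density of the image
    have hDd : Dense (h '' Sg) := by
      rw [dense_iff_closure_eq]
      apply Set.eq_univ_of_univ_subset
      calc (Set.univ : Set K) = h '' Set.univ := by rw [Set.image_univ, hs.range_eq]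
        _ = h '' closure Sg := by rw [hdense.closure_eq]
        _ ⊆ closure (h '' Sg) := image_closure_subset_closure_image hc
    -- the restriction of h
    have hmapc : Continuous (fun q : ↥Sg => (⟨h q.1, Set.mem_image_of_mem h q.2⟩ : ↥(h '' Sg))) :=
      (hc.comp continuous_subtype_val).subtype_mk _
    have hmaps : Function.Surjective
        (fun q : ↥Sg => (⟨h q.1, Set.mem_image_of_mem h q.2⟩ : ↥(h '' Sg))) := by
      rintro ⟨k, w, hw, rfl⟩
      exact ⟨⟨w, hw⟩, rfl⟩
    haveI : CompletelyRegularSpace L := inferInstance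
    exact ⟨inferInstance, h '' Sg, hDd,
      aux_cc_image hccSg hmapc hmaps, ↥Sg, inferInstance, inferInstance, aux_cr_subtype Sg,
      ⟨hccSg, Γ, pO, R, hskel, hfull⟩, _, hmapc, hmaps⟩
end

section
/- Let K be a compact (Hausdorff) space having a countable dense subset consisting of G_δ points of K. If there exist a compact space L admitting a retractional skeleton and a continuous surjection from L onto K, then K is metrizable. -/
open Filter Topology Set

universe u

lemma aux_mono_ge {Γ : Type*} [PartialOrder Γ]
    (dir : ∀ s t : Γ, ∃ w, s ≤ w ∧ t ≤ w) (s : ℕ → Γ) :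
    ∃ v : ℕ → Γ, Monotone v ∧ ∀ n, s n ≤ v n := by
  choose g hg1 hg2 using dir
  refine ⟨fun n => Nat.rec (s 0) (fun n ih => g ih (s (n + 1))) n,
    monotone_nat_of_le_succ fun n => hg1 _ _, fun n => ?_⟩
  cases n with
  | zero => exact le_refl _
  | succ n => exact hg2 _ _

lemma aux_secondCountable_image {M K : Type*} [TopologicalSpace M] [TopologicalSpace K]
    [CompactSpace M] [SecondCountableTopology M] [T2Space K]
    (g : M → K) (hc : Continuous g) (hs : Function.Surjective g) :
    SecondCountableTopology K := by
  obtain ⟨b, hbc, -, hb⟩ := TopologicalSpace.exists_countable_basis M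
  set S : Set (Set K) :=
    (fun t : Set (Set M) => (g '' (⋃₀ t)ᶜ)ᶜ) '' { t | Set.Finite t ∧ t ⊆ b } with hS
  have hSc : S.Countable := (Set.countable_setOf_finite_subset hbc).image _
  have hopen : ∀ u ∈ S, IsOpen u := by
    rintro u ⟨t, ⟨htf, htb⟩, rfl⟩
    have hto : IsOpen (⋃₀ t) := isOpen_sUnion fun u hu => hb.isOpen (htb hu)
    exact (((hto.isClosed_compl.isCompact).image hc).isClosed).isOpen_compl
  refine (TopologicalSpace.isTopologicalBasis_of_isOpen_of_nhds hopen ?_).secondCountableTopology hSc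
  intro y W hyW hW
  -- the fiber over y is compact and contained in g ⁻¹' W
  have hFc : IsCompact (g ⁻¹' {y}) := (isClosed_singleton.preimage hc).isCompact
  have hFW : g ⁻¹' {y} ⊆ g ⁻¹' W := fun z hz => by
    simp only [mem_preimage, mem_singleton_iff] at hz; simpa [hz] using hyW
  -- cover the fiber with basis elements inside g ⁻¹' W
  have hcov : ∀ z ∈ g ⁻¹' {y}, ∃ U : { U // U ∈ b ∧ U ⊆ g ⁻¹' W }, z ∈ (U : Set M) := by
    intro z hz
    obtain ⟨U, hUb, hzU, hUW⟩ :=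
      hb.exists_subset_of_mem_open (hFW hz) (hW.preimage hc)
    exact ⟨⟨U, hUb, hUW⟩, hzU⟩
  obtain ⟨t₀, ht₀⟩ := hFc.elim_finite_subcover
    (fun U : { U // U ∈ b ∧ U ⊆ g ⁻¹' W } => (U : Set M))
    (fun U => hb.isOpen U.2.1)
    (fun z hz => Set.mem_iUnion.mpr (hcov z hz))
  set t : Set (Set M) := Subtype.val '' (t₀ : Set { U // U ∈ b ∧ U ⊆ g ⁻¹' W }) with hT
  have htf : t.Finite := (t₀.finite_toSet).image _
  have htb : t ⊆ b := by rintro U ⟨V, -, rfl⟩; exact V.2.1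
  have htW : ⋃₀ t ⊆ g ⁻¹' W := by
    rintro z ⟨U, ⟨V, -, rfl⟩, hzU⟩; exact V.2.2 hzU
  have hFt : g ⁻¹' {y} ⊆ ⋃₀ t := by
    intro z hz
    obtain ⟨U, hU, hzU⟩ := Set.mem_iUnion₂.mp (ht₀ hz)
    exact ⟨U, ⟨U, hU, rfl⟩, hzU⟩
  refine ⟨(g '' (⋃₀ t)ᶜ)ᶜ, ⟨t, ⟨htf, htb⟩, rfl⟩, ?_, ?_⟩
  · rintro ⟨z, hz, hgz⟩
    exact hz (hFt (by simp [hgz]))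
  · intro y' hy'
    obtain ⟨z, rfl⟩ := hs y'
    have hz : z ∈ ⋃₀ t := by
      by_contra hzc
      exact hy' ⟨z, hzc, rfl⟩
    exact htW hz

/-- A compact space with a countable dense set of G-delta points which is
a continuous image of a compact space with a retractional skeleton is metrizable. -/
theorem metrizable_of_image_of_ncValdivia
    {K : Type u} [TopologicalSpace K] [CompactSpace K] [T2Space K]
    (hD : ∃ D : Set K, D.Countable ∧ Dense D ∧ ∀ x ∈ D, IsGδ ({x} : Set K))
    (h : ∃ (L : Type u) (_ : TopologicalSpace L) (_ : CompactSpace L) (_ : T2Space L),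
      HasRetractionalSkeleton L ∧ ∃ f : L → K, Continuous f ∧ Function.Surjective f) :
    TopologicalSpace.MetrizableSpace K := by
  obtain ⟨D, hDc, hDd, hDg⟩ := hD
  obtain ⟨L, _, _, _, ⟨Γ, _, r, hsk⟩, f, hfc, hfs⟩ := h
  haveI : Nonempty Γ := hsk.nonempty
  haveI : IsDirected Γ (· ≤ ·) := ⟨hsk.directed⟩
  -- every point of D is in the image of the range of some retraction
  have key : ∀ d ∈ D, ∃ t : Γ, d ∈ f '' Set.range (r t) := by
    intro d hd
    obtain ⟨x, rfl⟩ := hfs d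
    obtain ⟨U, hUo, hU⟩ := isGδ_iff_eq_iInter_nat.mp (hDg _ hd)
    have hxU : ∀ n, f x ∈ U n := by
      intro n
      have : f x ∈ ⋂ n, U n := hU ▸ Set.mem_singleton _
      exact Set.mem_iInter.mp this n
    have htend : Tendsto (fun s : Γ => f (r s x)) atTop (𝓝 (f x)) :=
      (hfc.tendsto x).comp (hsk.tendsto_id x)
    have hs : ∀ n, ∃ a : Γ, ∀ b ≥ a, f (r b x) ∈ U n := by
      intro n
      exact eventually_atTop.mp (htend ((hUo n).mem_nhds (hxU n)))
    choose s hsP using hs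
    obtain ⟨v, hv, hsv⟩ := aux_mono_ge hsk.directed s
    obtain ⟨t, htLUB, -⟩ := hsk.seq_sup v hv
    have htv : ∀ n, v n ≤ t := fun n => htLUB.1 (Set.mem_range_self n)
    have : ∀ n, f (r t x) ∈ U n := fun n => hsP n t ((hsv n).trans (htv n))
    have hft : f (r t x) ∈ ({f x} : Set K) := hU ▸ Set.mem_iInter.mpr this
    exact ⟨t, r t x, Set.mem_range_self x, hft⟩
  -- find a single retraction whose range maps onto K
  have main : ∃ T : Γ, Function.Surjective fun m : Set.range (r T) => f m.val := by
    cases isEmpty_or_nonempty K with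
    | inl hK => exact ⟨Classical.arbitrary Γ, fun y => isEmptyElim y⟩
    | inr hK =>
      obtain ⟨e, he⟩ := hDc.exists_eq_range hDd.nonempty
      have hek : ∀ n, ∃ t : Γ, e n ∈ f '' Set.range (r t) := fun n =>
        key (e n) (he ▸ Set.mem_range_self n)
      choose t ht using hek
      obtain ⟨v, hv, htv⟩ := aux_mono_ge hsk.directed t
      obtain ⟨T, hTLUB, -⟩ := hsk.seq_sup v hv
      have hTt : ∀ n, t n ≤ T := fun n =>
        (htv n).trans (hTLUB.1 (Set.mem_range_self n))
      have hsub : ∀ n, Set.range (r (t n)) ⊆ Set.range (r T) := by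
        rintro n z ⟨w, rfl⟩
        refine ⟨r (t n) w, ?_⟩
        exact congrFun (hsk.comp_eq_of_le (t n) T (hTt n)).1 w
      have hDsub : D ⊆ f '' Set.range (r T) := by
        rw [he]
        rintro d ⟨n, rfl⟩
        obtain ⟨z, hz, hfz⟩ := ht n
        exact ⟨z, hsub n hz, hfz⟩
      have hCc : IsCompact (f '' Set.range (r T)) := (hsk.compact_range T).image hfc
      have hCcl : IsClosed (f '' Set.range (r T)) := hCc.isClosed
      have hCuniv : f '' Set.range (r T) = Set.univ := by
        apply Set.eq_univ_of_univ_subset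
        calc (Set.univ : Set K) = closure D := (hDd.closure_eq).symm
        _ ⊆ closure (f '' Set.range (r T)) := closure_mono hDsub
        _ = f '' Set.range (r T) := hCcl.closure_eq
      refine ⟨T, fun y => ?_⟩
      obtain ⟨z, hz, hfz⟩ := (hCuniv ▸ Set.mem_univ y : y ∈ f '' Set.range (r T))
      exact ⟨⟨z, hz⟩, hfz⟩
  obtain ⟨T, hsurj⟩ := main
  haveI : CompactSpace (Set.range (r T)) := isCompact_iff_compactSpace.mp (hsk.compact_range T)
  haveI : TopologicalSpace.MetrizableSpace (Set.range (r T)) := hsk.metrizable_range T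
  haveI : SecondCountableTopology K :=
    aux_secondCountable_image (fun m : Set.range (r T) => f m.val)
      (hfc.comp continuous_subtype_val) hsurj
  infer_instance
end

section
/- Let {K_α}_{α∈A} be a family of compact spaces, each admitting a retractional skeleton. Then the one-point compactification of the topological sum ⊕_{α∈A} K_α admits a retractional skeleton (i.e., it is a non-commutative Valdivia compact space). -/
open Filter Topology Set

universe u

section NCVConstruction

open OnePoint

set_option linter.unusedSectionVars false
set_option maxHeartbeats 1000000

section Construction
variable {A : Type u} {K : A → Type u} [∀ α, TopologicalSpace (K α)]
  [∀ α, CompactSpace (K α)] [∀ α, T2Space (K α)]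
  {Γ' : A → Type u} [∀ α, PartialOrder (Γ' α)]

instance sigmaWLC : WeaklyLocallyCompactSpace (Σ α, K α) where
  exists_compact_mem_nhds := fun ⟨α, x⟩ =>
    ⟨Set.range (Sigma.mk α), isCompact_range continuous_sigmaMk,
      isOpen_range_sigmaMk.mem_nhds ⟨x, rfl⟩⟩

def NCVSupp (f : ∀ α, Option (Γ' α)) : Set A := {α | (f α).isSome}

def ΓS (Γ' : A → Type u) : Type u := {f : ∀ α, Option (Γ' α) // (NCVSupp f).Countable}

instance : PartialOrder (ΓS (A := A) Γ') where
  le f g := ∀ α (s : Γ' α), f.1 α = Option.some s → ∃ t, g.1 α = Option.some t ∧ s ≤ t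
  le_refl f α s hs := ⟨s, hs, le_rfl⟩
  le_trans f g h hfg hgh α s hs := by
    obtain ⟨t, ht, hst⟩ := hfg α s hs
    obtain ⟨w, hw, htw⟩ := hgh α t ht
    exact ⟨w, hw, hst.trans htw⟩
  le_antisymm f g hfg hgf := by
    apply Subtype.ext; funext α
    cases hf : f.1 α with
    | none =>
      cases hg : g.1 α with
      | none => rfl
      | some t =>
        obtain ⟨s, hs, _⟩ := hgf α t hg
        rw [hf] at hs; cases hs
    | some s =>
      obtain ⟨t, ht, hst⟩ := hfg α s hf
      obtain ⟨s', hs', hts'⟩ := hgf α t ht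
      rw [hf] at hs'
      obtain rfl : s = s' := by injection hs'
      rw [ht, le_antisymm hst hts']

lemma ΓS.le_def {f g : ΓS (A := A) Γ'} :
    f ≤ g ↔ ∀ α (s : Γ' α), f.1 α = Option.some s → ∃ t, g.1 α = Option.some t ∧ s ≤ t := Iff.rfl

variable (r' : ∀ α, Γ' α → K α → K α)

/-- the retraction on the sum part -/
def ncvG (f : ΓS (A := A) Γ') : (Σ α, K α) → OnePoint (Σ α, K α) :=
  fun p => Option.elim (f.1 p.1) ∞ fun s => ((⟨p.1, r' p.1 s p.2⟩ : Σ α, K α) : OnePoint (Σ α, K α))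

/-- the retraction -/
def ncvR (f : ΓS (A := A) Γ') : OnePoint (Σ α, K α) → OnePoint (Σ α, K α) :=
  fun o => Option.elim o ∞ (ncvG r' f)

@[simp] lemma ncvR_infty (f : ΓS (A := A) Γ') : ncvR r' f ∞ = ∞ := rfl
@[simp] lemma ncvR_coe (f : ΓS (A := A) Γ') (p : Σ α, K α) :
    ncvR r' f p = Option.elim (f.1 p.1) ∞
      (fun s => ((⟨p.1, r' p.1 s p.2⟩ : Σ α, K α) : OnePoint (Σ α, K α))) := rfl
lemma ncvR_coe_some (f : ΓS (A := A) Γ') {α : A} {s : Γ' α} (hs : f.1 α = Option.some s) (x : K α) :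
    ncvR r' f (((⟨α, x⟩ : Σ α, K α) : OnePoint (Σ α, K α))) =
      ((⟨α, r' α s x⟩ : Σ α, K α) : OnePoint (Σ α, K α)) := by
  simp [ncvR_coe, hs]
lemma ncvR_coe_none (f : ΓS (A := A) Γ') {α : A} (hs : f.1 α = none) (x : K α) :
    ncvR r' f (((⟨α, x⟩ : Σ α, K α) : OnePoint (Σ α, K α))) = ∞ := by
  simp [ncvR_coe, hs]


lemma ncvG_continuous (hc : ∀ α s, Continuous (r' α s)) (f : ΓS (A := A) Γ') :
    Continuous (ncvG r' f) := by
  apply continuous_sigma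
  intro α
  cases hf : f.1 α with
  | none => simpa [ncvG, hf] using continuous_const
  | some s =>
    simp only [ncvG, hf, Option.elim]
    exact OnePoint.continuous_coe.comp (continuous_sigmaMk.comp (hc α s))

lemma ncvG_tendsto (hc : ∀ α s, Continuous (r' α s)) (f : ΓS (A := A) Γ') :
    Tendsto (ncvG r' f) (coclosedCompact (Σ α, K α)) (𝓝 ∞) := by
  rw [hasBasis_coclosedCompact.tendsto_iff OnePoint.hasBasis_nhds_infty]
  rintro C ⟨hCc, hCk⟩
  obtain ⟨F, hF⟩ := hCk.elim_finite_subcover (fun α => Set.range (Sigma.mk α))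
      (fun _ => isOpen_range_sigmaMk) (fun p _ => mem_iUnion.mpr ⟨p.1, ⟨p.2, rfl⟩⟩)
  have hDc : IsClosed (ncvG r' f ⁻¹' ((↑) '' C)) :=
    (OnePoint.isClosed_image_coe.mpr ⟨hCc, hCk⟩).preimage (ncvG_continuous r' hc f)
  refine ⟨ncvG r' f ⁻¹' ((↑) '' C), ⟨hDc, ?_⟩, ?_⟩
  · have hcpt : IsCompact (⋃ α ∈ F, Set.range (Sigma.mk α) : Set (Σ α, K α)) :=
      F.isCompact_biUnion fun α _ => isCompact_range continuous_sigmaMk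
    apply IsCompact.of_isClosed_subset hcpt hDc
    rintro ⟨β, y⟩ hy
    simp only [mem_preimage] at hy
    cases hf : f.1 β with
    | none =>
      exfalso
      have : ncvG r' f ⟨β, y⟩ = ∞ := by simp [ncvG, hf]
      rw [this] at hy
      exact OnePoint.infty_notMem_image_coe hy
    | some s =>
      have hv : ncvG r' f ⟨β, y⟩ = ((⟨β, r' β s y⟩ : Σ α, K α) : OnePoint (Σ α, K α)) := by
        simp [ncvG, hf]
      rw [hv] at hy
      obtain ⟨c, hcC, hceq⟩ := hy
      obtain rfl : c = ⟨β, r' β s y⟩ := OnePoint.coe_injective hceq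
      have := hF hcC
      simp only [mem_iUnion] at this ⊢
      obtain ⟨α, hαF, z, hz⟩ := this
      obtain rfl : α = β := congrArg Sigma.fst hz
      exact ⟨_, hαF, y, rfl⟩
  · intro p hp
    simp only [mem_compl_iff, mem_preimage] at hp
    cases hq : ncvG r' f p with
    | infty => exact Or.inr rfl
    | coe q =>
      rw [hq] at hp
      left
      refine ⟨q, fun hqC => hp ⟨q, hqC, rfl⟩, rfl⟩

lemma ncvR_continuous (hc : ∀ α s, Continuous (r' α s)) (f : ΓS (A := A) Γ') :
    Continuous (ncvR r' f) := by
  rw [OnePoint.continuous_iff]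
  exact ⟨ncvG_tendsto r' hc f, ncvG_continuous r' hc f⟩


lemma ncvR_retraction (hr : ∀ α s, r' α s ∘ r' α s = r' α s) (f : ΓS (A := A) Γ') :
    ncvR r' f ∘ ncvR r' f = ncvR r' f := by
  funext o
  induction o using OnePoint.rec with
  | infty => rfl
  | coe p =>
    obtain ⟨α, x⟩ := p
    cases hf : f.1 α with
    | none => simp [Function.comp_apply, ncvR_coe_none r' f hf]
    | some s =>
      have h1 := ncvR_coe_some r' f hf x
      have h2 := ncvR_coe_some r' f hf (r' α s x)
      simp only [Function.comp_apply, h1, h2]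
      have h3 : r' α s (r' α s x) = r' α s x := congrFun (hr α s) x
      rw [h3]

lemma ncvR_comp_le
    (hcomp : ∀ α (s t : Γ' α), s ≤ t → r' α t ∘ r' α s = r' α s ∧ r' α s ∘ r' α t = r' α s)
    {f g : ΓS (A := A) Γ'} (hfg : f ≤ g) :
    ncvR r' g ∘ ncvR r' f = ncvR r' f ∧ ncvR r' f ∘ ncvR r' g = ncvR r' f := by
  refine ⟨funext fun o => ?_, funext fun o => ?_⟩
  · induction o using OnePoint.rec with
    | infty => rfl
    | coe p =>
      obtain ⟨α, x⟩ := p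
      cases hf : f.1 α with
      | none =>
        simp only [Function.comp_apply, ncvR_coe_none r' f hf, ncvR_infty]
      | some s =>
        obtain ⟨t, ht, hst⟩ := hfg α s hf
        simp only [Function.comp_apply, ncvR_coe_some r' f hf, ncvR_coe_some r' g ht]
        have h3 : r' α t (r' α s x) = r' α s x := congrFun ((hcomp α s t hst).1) x
        rw [h3]
  · induction o using OnePoint.rec with
    | infty => rfl
    | coe p =>
      obtain ⟨α, x⟩ := p
      cases hf : f.1 α with
      | none =>
        cases hg : g.1 α with
        | none =>
          simp only [Function.comp_apply, ncvR_coe_none r' g hg, ncvR_coe_none r' f hf, ncvR_infty]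
        | some t =>
          simp only [Function.comp_apply, ncvR_coe_some r' g hg, ncvR_coe_none r' f hf,
            ncvR_coe_none r' f hf (r' α t x)]
      | some s =>
        obtain ⟨t, ht, hst⟩ := hfg α s hf
        simp only [Function.comp_apply, ncvR_coe_some r' g ht, ncvR_coe_some r' f hf]
        have h3 : r' α s (r' α t x) = r' α s x := congrFun ((hcomp α s t hst).2) x
        rw [h3]

lemma ncvR_range (f : ΓS (A := A) Γ') : Set.range (ncvR r' f) = {(∞ : OnePoint (Σ α, K α))} ∪
    (↑) '' {p : Σ α, K α | ∃ s, f.1 p.1 = Option.some s ∧ p.2 ∈ Set.range (r' p.1 s)} := by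
  ext o; constructor
  · rintro ⟨w, rfl⟩
    induction w using OnePoint.rec with
    | infty => exact Or.inl rfl
    | coe p =>
      obtain ⟨α, x⟩ := p
      cases hf : f.1 α with
      | none => rw [ncvR_coe_none r' f hf]; exact Or.inl rfl
      | some s =>
        rw [ncvR_coe_some r' f hf]
        exact Or.inr ⟨⟨α, r' α s x⟩, ⟨s, hf, ⟨x, rfl⟩⟩, rfl⟩
  · rintro (rfl | ⟨⟨α, y⟩, ⟨s, hs, ⟨x, hx⟩⟩, rfl⟩)
    · exact ⟨∞, rfl⟩
    · exact ⟨((⟨α, x⟩ : Σ α, K α) : OnePoint (Σ α, K α)), by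
        rw [ncvR_coe_some r' f hs x]; simp only at hx ⊢; rw [hx]⟩

lemma ncvR_isClosed_range (hcr : ∀ α s, IsCompact (Set.range (r' α s))) (f : ΓS (A := A) Γ') :
    IsClosed (Set.range (ncvR r' f)) := by
  rw [← isOpen_compl_iff]
  have hW : (Set.range (ncvR r' f))ᶜ =
      (↑) '' {p : Σ α, K α | ∀ s, f.1 p.1 = Option.some s → p.2 ∉ Set.range (r' p.1 s)} := by
    rw [ncvR_range]
    ext o
    constructor
    · intro ho
      induction o using OnePoint.rec with
      | infty => exact absurd (Or.inl rfl) ho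
      | coe p =>
        refine ⟨p, ?_, rfl⟩
        intro s hs hmem
        exact ho (Or.inr ⟨p, ⟨s, hs, hmem⟩, rfl⟩)
    · rintro ⟨q, hq, rfl⟩ hmem
      rcases hmem with h | ⟨p', ⟨s, hs, hmem'⟩, he⟩
      · exact OnePoint.coe_ne_infty q h
      · obtain rfl : p' = q := OnePoint.coe_injective he
        exact hq s hs hmem'
  rw [hW, OnePoint.isOpen_image_coe]
  rw [isOpen_sigma_iff]
  intro α
  cases hf : f.1 α with
  | none =>
    convert isOpen_univ
    ext x; simp [hf]
  | some s =>
    have : (Sigma.mk α ⁻¹'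
        {p : Σ α, K α | ∀ s, f.1 p.1 = Option.some s → p.2 ∉ Set.range (r' p.1 s)}) =
        (Set.range (r' α s))ᶜ := by
      ext x; simp [hf]
    rw [this]
    exact (hcr α s).isClosed.isOpen_compl

lemma ΓS.nonempty : Nonempty (ΓS (A := A) Γ') :=
  ⟨⟨fun _ => none, Set.countable_empty.mono (fun α hα => by simp [NCVSupp] at hα)⟩⟩

lemma ΓS.directed (hdir : ∀ α (s t : Γ' α), ∃ w, s ≤ w ∧ t ≤ w) (f g : ΓS (A := A) Γ') :
    ∃ w, f ≤ w ∧ g ≤ w := by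
  choose ub h1 h2 using hdir
  refine ⟨⟨fun α => Option.elim (f.1 α) (g.1 α)
      (fun s => Option.elim (g.1 α) (Option.some s) (fun t => Option.some (ub α s t))), ?_⟩,
      ?_, ?_⟩
  · apply (f.2.union g.2).mono
    intro α hα
    rcases hf : f.1 α with _ | s
    · rcases hg : g.1 α with _ | t
      · exfalso; simp [NCVSupp, hf, hg] at hα
      · exact Or.inr (by simp [NCVSupp, hg])
    · exact Or.inl (by simp [NCVSupp, hf])
  · intro α s hs
    rcases hg : g.1 α with _ | t
    · exact ⟨s, by simp [hs, hg], le_rfl⟩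
    · exact ⟨ub α s t, by simp [hs, hg], h1 α s t⟩
  · intro α t ht
    rcases hf : f.1 α with _ | s
    · exact ⟨t, by simp [hf, ht], le_rfl⟩
    · exact ⟨ub α s t, by simp [hf, ht], h2 α s t⟩


lemma secondCountable_of_clopen_cover {Z : Type u} [TopologicalSpace Z] [CompactSpace Z]
    (z₀ : Z) (V : ℕ → Set Z) (hcl : ∀ n, IsClopen (V n))
    (hsc : ∀ n, SecondCountableTopology (V n))
    (hz : ∀ n, z₀ ∉ V n) (hcov : ∀ z, z ≠ z₀ → ∃ n, z ∈ V n) :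
    SecondCountableTopology Z := by
  have hb : ∀ n, ∃ b : Set (Set Z), b.Countable ∧ (∀ u ∈ b, IsOpen u) ∧
      ∀ (a : Z) (u : Set Z), a ∈ V n → a ∈ u → IsOpen u → ∃ v ∈ b, a ∈ v ∧ v ⊆ u := by
    intro n
    obtain ⟨b, hbc, _, hbasis⟩ := TopologicalSpace.exists_countable_basis ↥(V n)
    refine ⟨(fun u => (Subtype.val : V n → Z) '' u) '' b, hbc.image _, ?_, ?_⟩
    · rintro u ⟨u', hu', rfl⟩
      exact ((hcl n).2.isOpenMap_subtype_val) u' (hbasis.isOpen hu')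
    · intro a u ha hau hu
      have hmem : (⟨a, ha⟩ : V n) ∈ (Subtype.val ⁻¹' u : Set ↥(V n)) := hau
      obtain ⟨v, hv, hav, hvu⟩ := hbasis.exists_subset_of_mem_open hmem
        (hu.preimage continuous_subtype_val)
      refine ⟨Subtype.val '' v, ⟨v, hv, rfl⟩, ⟨⟨a, ha⟩, hav, rfl⟩, ?_⟩
      rintro z ⟨w, hw, rfl⟩
      exact hvu hw
  choose b hbc hbo hbn using hb
  have hBc : ((⋃ n, b n) ∪ (Set.range fun t : Finset ℕ => (⋃ n ∈ t, V n)ᶜ)).Countable :=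
    (countable_iUnion hbc).union (countable_range _)
  apply TopologicalSpace.IsTopologicalBasis.secondCountableTopology
    (b := (⋃ n, b n) ∪ (Set.range fun t : Finset ℕ => (⋃ n ∈ t, V n)ᶜ)) ?_ hBc
  apply TopologicalSpace.isTopologicalBasis_of_isOpen_of_nhds
  · rintro u (hu | ⟨t, rfl⟩)
    · obtain ⟨n, hn⟩ := mem_iUnion.mp hu
      exact hbo n u hn
    · exact (t.finite_toSet.isClosed_biUnion fun n _ => (hcl n).1).isOpen_compl
  · intro a u hau hu
    by_cases ha : a = z₀
    · subst ha
      have hcpt : IsCompact uᶜ := hu.isClosed_compl.isCompact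
      have hcover : uᶜ ⊆ ⋃ n, V n := fun z hzc =>
        mem_iUnion.mpr (hcov z (fun h => (h ▸ hzc) hau))
      obtain ⟨t, ht⟩ := hcpt.elim_finite_subcover V (fun n => (hcl n).2) hcover
      refine ⟨(⋃ n ∈ t, V n)ᶜ, Or.inr ⟨t, rfl⟩, ?_, ?_⟩
      · simp only [mem_compl_iff, mem_iUnion]
        rintro ⟨n, _, hmem⟩
        exact hz n hmem
      · intro z hzmem
        by_contra hzu
        exact hzmem (ht hzu)
    · obtain ⟨n, hn⟩ := hcov a ha
      obtain ⟨v, hv, hav, hvu⟩ := hbn n a u hn hau hu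
      exact ⟨v, Or.inl (mem_iUnion.mpr ⟨n, hv⟩), hav, hvu⟩

lemma ncvR_metrizable (hcr : ∀ α s, IsCompact (Set.range (r' α s)))
    (hmet : ∀ α s, TopologicalSpace.MetrizableSpace (Set.range (r' α s)))
    (f : ΓS (A := A) Γ') :
    TopologicalSpace.MetrizableSpace (Set.range (ncvR r' f)) := by
  haveI : CompactSpace ↥(Set.range (ncvR r' f)) :=
    isCompact_iff_compactSpace.mp ((ncvR_isClosed_range r' hcr f).isCompact)
  have hsc : SecondCountableTopology ↥(Set.range (ncvR r' f)) := by
    set R := Set.range (ncvR r' f) with hR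
    set Vp : A → Set ↥R := fun α =>
      (Subtype.val : ↥R → OnePoint (Σ α, K α)) ⁻¹' (OnePoint.some '' Set.range (Sigma.mk α)) with hVp
    have key : ∀ (α : A) (s : Γ' α), f.1 α = Option.some s →
        SecondCountableTopology ↥(Vp α) := by
      intro α s hs
      haveI : CompactSpace ↥(Set.range (r' α s)) := isCompact_iff_compactSpace.mp (hcr α s)
      haveI := hmet α s
      have hmemR : ∀ y : ↥(Set.range (r' α s)),
          ((⟨α, y.1⟩ : Σ β, K β) : OnePoint (Σ β, K β)) ∈ R := by
        intro y
        rw [hR, ncvR_range]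
        exact Or.inr ⟨⟨α, y.1⟩, ⟨s, hs, y.2⟩, rfl⟩
      set φ : ↥(Set.range (r' α s)) → ↥(Vp α) := fun y =>
        ⟨⟨((⟨α, y.1⟩ : Σ β, K β) : OnePoint (Σ β, K β)), hmemR y⟩,
          ⟨⟨α, y.1⟩, ⟨y.1, rfl⟩, rfl⟩⟩ with hφ
      have hφinj : Function.Injective φ := by
        intro y y' he
        apply Subtype.ext
        have h1 : ((⟨α, y.1⟩ : Σ β, K β) : OnePoint (Σ β, K β)) =
            ((⟨α, y'.1⟩ : Σ β, K β) : OnePoint (Σ β, K β)) := congrArg (fun z => z.1.1) he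
        exact sigma_mk_injective (OnePoint.coe_injective h1)
      have hφsurj : Function.Surjective φ := by
        rintro ⟨⟨z, hzR⟩, hzV⟩
        obtain ⟨q, ⟨x, hx⟩, hq⟩ := hzV
        subst hx
        have hq' : ((⟨α, x⟩ : Σ β, K β) : OnePoint (Σ β, K β)) = z := hq
        have hzR' := hzR
        rw [hR, ncvR_range] at hzR'
        rcases hzR' with h | ⟨p, ⟨s', hs', hmem⟩, he⟩
        · exfalso
          rw [← hq'] at h
          exact OnePoint.coe_ne_infty _ h
        · obtain rfl : p = ⟨α, x⟩ := OnePoint.coe_injective (by rw [he, ← hq'])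
          rw [hs] at hs'
          obtain rfl : s = s' := by injection hs'
          refine ⟨⟨x, hmem⟩, ?_⟩
          apply Subtype.ext; apply Subtype.ext
          exact hq'
      have hφcont : Continuous φ := by
        apply Continuous.subtype_mk
        apply Continuous.subtype_mk
        exact OnePoint.continuous_coe.comp (continuous_sigmaMk.comp continuous_subtype_val)
      have homeo := Continuous.homeoOfEquivCompactToT2
        (f := Equiv.ofBijective φ ⟨hφinj, hφsurj⟩) hφcont
      exact homeo.symm.isEmbedding.secondCountableTopology
    have hS : Countable ↥(NCVSupp f.1) := f.2.to_subtype
    obtain ⟨g, hgsurj⟩ := exists_surjective_nat (Option ↥(NCVSupp f.1))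
    have hz₀ : (∞ : OnePoint (Σ α, K α)) ∈ R := ⟨∞, rfl⟩
    set V : ℕ → Set ↥R := fun n => Option.elim (g n) ∅ (fun αh => Vp αh.1) with hV
    apply secondCountable_of_clopen_cover (⟨∞, hz₀⟩ : ↥R) V
    · intro n
      rcases hg : g n with _ | αh
      · simpa [hV, hg] using isClopen_empty
      · simp only [hV, hg, Option.elim]
        apply IsClopen.preimage _ continuous_subtype_val
        constructor
        · exact OnePoint.isClosed_image_coe.mpr
            ⟨Topology.IsClosedEmbedding.sigmaMk.isClosed_range,
              isCompact_range continuous_sigmaMk⟩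
        · exact OnePoint.isOpen_image_coe.mpr isOpen_range_sigmaMk
    · intro n
      rcases hg : g n with _ | αh
      · have hVn : V n = ∅ := by simp [hV, hg]
        rw [hVn]
        haveI : IsEmpty ↥(∅ : Set ↥R) := Set.isEmpty_coe_sort.mpr rfl
        infer_instance
      · have hVn : V n = Vp αh.1 := by simp [hV, hg]
        rw [hVn]
        obtain ⟨α, hα⟩ := αh
        have hsαs : ∃ s : Γ' α, f.1 α = Option.some s := by
          rcases hsome : f.1 α with _ | s
          · exfalso; rw [NCVSupp, mem_setOf_eq, hsome] at hα; exact (Bool.false_ne_true hα)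
          · exact ⟨s, rfl⟩
        obtain ⟨s, hsv⟩ := hsαs
        exact key α s hsv
    · intro n
      rcases hg : g n with _ | αh
      · simp [hV, hg]
      · simp only [hV, hg, Option.elim, hVp, mem_preimage]
        rintro ⟨q, -, hq⟩
        exact OnePoint.coe_ne_infty q hq
    · rintro ⟨z, hzR⟩ hzne
      have hzR' := hzR
      rw [hR, ncvR_range] at hzR'
      rcases hzR' with h | ⟨p, ⟨s', hs', hmem⟩, he⟩
      · exact absurd (Subtype.ext (show z = ∞ from h)) hzne
      · have hαsupp : p.1 ∈ NCVSupp f.1 := by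
          rw [NCVSupp, mem_setOf_eq, hs']; rfl
        obtain ⟨n, hn⟩ := hgsurj (Option.some ⟨p.1, hαsupp⟩)
        refine ⟨n, ?_⟩
        simp only [hV, hn, Option.elim, hVp, mem_preimage]
        exact ⟨p, ⟨p.2, rfl⟩, he⟩
  exact TopologicalSpace.metrizableSpace_of_t3_secondCountable ↥(Set.range (ncvR r' f))


lemma ncvR_seq_sup
    (hseq : ∀ α (v : ℕ → Γ' α), Monotone v → ∃ t, IsLUB (Set.range v) t ∧
      ∀ x, Tendsto (fun n => r' α (v n) x) atTop (𝓝 (r' α t x)))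
    (u : ℕ → ΓS (A := A) Γ') (hu : Monotone u) :
    ∃ t, IsLUB (Set.range u) t ∧
      ∀ x, Tendsto (fun n => ncvR r' (u n) x) atTop (𝓝 (ncvR r' t x)) := by
  classical
  have hsome : ∀ {n m : ℕ}, n ≤ m → ∀ {α}, ((u n).1 α).isSome → ((u m).1 α).isSome := by
    intro n m hnm α hn
    obtain ⟨s, hs⟩ := Option.isSome_iff_exists.mp hn
    obtain ⟨t, ht, -⟩ := hu hnm α s hs
    rw [ht]; rfl
  have key : ∀ α, (∃ n, ((u n).1 α).isSome) → ∃ t : Γ' α,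
      (∀ n s, (u n).1 α = Option.some s → s ≤ t) ∧
      (∀ b : Γ' α, (∀ n s, (u n).1 α = Option.some s → s ≤ b) → t ≤ b) ∧
      ∀ x : K α, Tendsto (fun n => ncvR r' (u n) ((⟨α, x⟩ : Σ β, K β) : OnePoint (Σ β, K β)))
        atTop (𝓝 (((⟨α, r' α t x⟩ : Σ β, K β) : OnePoint (Σ β, K β)))) := by
    intro α hex
    set n₀ := Nat.find hex with hn₀
    have hs0 : ((u n₀).1 α).isSome := Nat.find_spec hex
    have hsom : ∀ k, ((u (n₀ + k)).1 α).isSome := fun k => hsome (Nat.le_add_right _ _) hs0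
    set v : ℕ → Γ' α := fun k => ((u (n₀ + k)).1 α).get (hsom k) with hv
    have hvspec : ∀ k, (u (n₀ + k)).1 α = Option.some (v k) := fun k =>
      (Option.some_get (hsom k)).symm
    have hvmono : Monotone v := by
      intro k l hkl
      obtain ⟨t, ht, hle⟩ := hu (by omega : n₀ + k ≤ n₀ + l) α (v k) (hvspec k)
      rw [hvspec l] at ht
      obtain rfl : t = v l := by injection ht with h; exact h.symm
      exact hle
    obtain ⟨t, hlub, hconv⟩ := hseq α v hvmono
    have hval : ∀ n, n₀ ≤ n → (u n).1 α = Option.some (v (n - n₀)) := by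
      intro n hn
      have := hvspec (n - n₀)
      rwa [Nat.add_sub_cancel' hn] at this
    refine ⟨t, ?_, ?_, ?_⟩
    · intro n s hs
      have hn0 : n₀ ≤ n := Nat.find_le (show ((u n).1 α).isSome by rw [hs]; rfl)
      have := hval n hn0
      rw [hs] at this
      obtain rfl : s = v (n - n₀) := by injection this
      exact hlub.1 ⟨n - n₀, rfl⟩
    · intro b hb
      apply hlub.2
      rintro x ⟨k, rfl⟩
      exact hb (n₀ + k) (v k) (hvspec k)
    · intro x
      have h1 : Tendsto (fun n => r' α (v (n - n₀)) x) atTop (𝓝 (r' α t x)) :=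
        (hconv x).comp (tendsto_sub_atTop_nat n₀)
      have h2 : Tendsto
          (fun n => ((⟨α, r' α (v (n - n₀)) x⟩ : Σ β, K β) : OnePoint (Σ β, K β))) atTop
          (𝓝 (((⟨α, r' α t x⟩ : Σ β, K β) : OnePoint (Σ β, K β)))) :=
        ((OnePoint.continuous_coe.comp continuous_sigmaMk).tendsto _).comp h1
      apply Filter.Tendsto.congr' _ h2
      filter_upwards [eventually_ge_atTop n₀] with n hn
      rw [ncvR_coe_some r' (u n) (hval n hn) x]
  choose tα h1 h2 h3 using key
  have hTc : (NCVSupp (fun α => if h : ∃ n, ((u n).1 α).isSome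
      then Option.some (tα α h) else none)).Countable := by
    apply (Set.countable_iUnion (fun n => (u n).2)).mono
    intro α hα
    rw [NCVSupp, mem_setOf_eq] at hα
    by_cases h : ∃ n, ((u n).1 α).isSome
    · obtain ⟨n, hn⟩ := h
      exact mem_iUnion.mpr ⟨n, hn⟩
    · exfalso
      have hα' : (if h : ∃ n, ((u n).1 α).isSome then Option.some (tα α h) else none).isSome :=
        hα
      rw [dif_neg h] at hα'
      simp at hα'
  refine ⟨⟨fun α => if h : ∃ n, ((u n).1 α).isSome then Option.some (tα α h) else none, hTc⟩,
    ⟨?_, ?_⟩, ?_⟩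
  · rintro _ ⟨n, rfl⟩
    intro α s hs
    have h : ∃ n, ((u n).1 α).isSome := ⟨n, by rw [hs]; rfl⟩
    exact ⟨tα α h, dif_pos h, h1 α h n s hs⟩
  · intro b hb
    intro α s hs
    by_cases h : ∃ n, ((u n).1 α).isSome
    · have hs' : (if h : ∃ n, ((u n).1 α).isSome then Option.some (tα α h) else none)
          = Option.some s := hs
      rw [dif_pos h] at hs'
      obtain rfl : s = tα α h := by injection hs'.symm
      obtain ⟨n, hn⟩ := h
      obtain ⟨s', hs'⟩ := Option.isSome_iff_exists.mp hn
      obtain ⟨t', hbt', -⟩ := hb ⟨n, rfl⟩ α s' hs'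
      refine ⟨t', hbt', h2 α _ t' ?_⟩
      intro m s'' hs''
      obtain ⟨t'', ht'', hle⟩ := hb ⟨m, rfl⟩ α s'' hs''
      rw [hbt'] at ht''
      obtain rfl : t' = t'' := by injection ht''
      exact hle
    · have hs' : (if h : ∃ n, ((u n).1 α).isSome then Option.some (tα α h) else none)
          = Option.some s := hs
      rw [dif_neg h] at hs'
      exact absurd hs' (by simp)
  · intro x
    induction x using OnePoint.rec with
    | infty => exact tendsto_const_nhds (x := (∞ : OnePoint (Σ α, K α)))
    | coe p =>
      obtain ⟨α, y⟩ := p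
      by_cases h : ∃ n, ((u n).1 α).isSome
      · have hT : (fun α => if h : ∃ n, ((u n).1 α).isSome then Option.some (tα α h) else none) α
            = Option.some (tα α h) := dif_pos h
        rw [ncvR_coe_some r' (⟨_, hTc⟩ : ΓS (A := A) Γ') hT y]
        exact h3 α h y
      · have hT : (fun α => if h : ∃ n, ((u n).1 α).isSome then Option.some (tα α h) else none) α
            = none := dif_neg h
        rw [ncvR_coe_none r' (⟨_, hTc⟩ : ΓS (A := A) Γ') hT y]
        push_neg at h
        have hall : ∀ n, (u n).1 α = none := fun n =>
          Option.not_isSome_iff_eq_none.mp (h n)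
        apply Filter.Tendsto.congr (fun n => (ncvR_coe_none r' (u n) (hall n) y).symm)
        exact tendsto_const_nhds

lemma ncvR_tendsto_id (hne : ∀ α, Nonempty (Γ' α))
    (hdir : ∀ α (s t : Γ' α), ∃ w, s ≤ w ∧ t ≤ w)
    (hti : ∀ α (x : K α), Tendsto (fun s => r' α s x) atTop (𝓝 x))
    (x : OnePoint (Σ α, K α)) :
    Tendsto (fun f : ΓS (A := A) Γ' => ncvR r' f x) atTop (𝓝 x) := by
  classical
  induction x using OnePoint.rec with
  | infty => simpa using tendsto_const_nhds
  | coe p =>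
    obtain ⟨α, y⟩ := p
    rw [Filter.tendsto_def]
    intro U hU
    haveI := hne α
    haveI : IsDirected (Γ' α) (· ≤ ·) := ⟨hdir α⟩
    have hc : Tendsto (fun s : Γ' α => ((⟨α, r' α s y⟩ : Σ β, K β) : OnePoint (Σ β, K β)))
        atTop (𝓝 (((⟨α, y⟩ : Σ β, K β) : OnePoint (Σ β, K β)))) :=
      ((OnePoint.continuous_coe.comp continuous_sigmaMk).tendsto _).comp (hti α y)
    have hV := mem_map.mp (hc hU)
    obtain ⟨s₀, hs₀⟩ := mem_atTop_sets.mp hV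
    have hf₀c : (NCVSupp (Function.update (fun β => (none : Option (Γ' β))) α
        (Option.some s₀))).Countable := by
      apply (Set.countable_singleton α).mono
      intro β hβ
      rw [NCVSupp, mem_setOf_eq] at hβ
      by_contra hne'
      rw [Function.update_of_ne hne'] at hβ
      simp at hβ
    set f₀ : ΓS (A := A) Γ' :=
      ⟨Function.update (fun β => (none : Option (Γ' β))) α (Option.some s₀), hf₀c⟩ with hf₀def
    refine mem_of_superset (Filter.Ici_mem_atTop f₀) ?_
    intro g hg
    have hf₀α : f₀.1 α = Option.some s₀ := by
      rw [hf₀def]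
      simp
    obtain ⟨t, ht, hst⟩ := hg α s₀ hf₀α
    rw [mem_preimage, ncvR_coe_some r' g ht y]
    exact hs₀ t hst

end Construction

end NCVConstruction


/-- The one-point compactification of a topological sum of compact spaces,
each admitting a retractional skeleton, admits a retractional skeleton. -/
theorem onePoint_sum_of_ncValdivia
    {A : Type u} {K : A → Type u} [∀ α, TopologicalSpace (K α)]
    [∀ α, CompactSpace (K α)] [∀ α, T2Space (K α)]
    (h : ∀ α, HasRetractionalSkeleton (K α)) :
    HasRetractionalSkeleton (OnePoint (Σ α, K α)) := by
  choose Γ' po r' hsk using h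
  letI : ∀ α, PartialOrder (Γ' α) := po
  refine ⟨ΓS Γ', inferInstance, ncvR r', ?_⟩
  exact
  { nonempty := ΓS.nonempty
    directed := ΓS.directed (fun α => (hsk α).directed)
    continuous := ncvR_continuous r' (fun α => (hsk α).continuous)
    retraction := ncvR_retraction r' (fun α => (hsk α).retraction)
    compact_range := fun f =>
      (ncvR_isClosed_range r' (fun α => (hsk α).compact_range) f).isCompact
    metrizable_range := fun f =>
      ncvR_metrizable r' (fun α => (hsk α).compact_range)
        (fun α => (hsk α).metrizable_range) f
    comp_eq_of_le := fun f g hfg =>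
      ncvR_comp_le r' (fun α => (hsk α).comp_eq_of_le) hfg
    seq_sup := ncvR_seq_sup r' (fun α => (hsk α).seq_sup)
    tendsto_id := ncvR_tendsto_id r' (fun α => (hsk α).nonempty)
      (fun α => (hsk α).directed) (fun α => (hsk α).tendsto_id) }
end
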